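/- arXiv:1103.2427 — 8 statements merged into one kernel-verified Lean document; each statement's English description precedes it below -/
import Mathlib

section
/- If the generalized Petersen graph P(n,k) has an efficient dominating set, then its domination number γ(P(n,k)) equals n/2 and n ≡ 0 (mod 4). -/
open SimpleGraph

/-- The generalized Petersen graph P(n,k): outer vertices `Sum.inl i`,
inner vertices `Sum.inr i`, indices in `ZMod n`. -/
def petersen (n k : ℕ) : SimpleGraph (ZMod n ⊕ ZMod n) :=
  SimpleGraph.fromRel (fun a b =>
    match a, b with
    | Sum.inl i, Sum.inl j => j = i + 1
    | Sum.inl i, Sum.inr j => j = i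
    | Sum.inr i, Sum.inr j => j = i + (k : ZMod n)
    | _, _ => False)

/-- S is a dominating set: N[S] = V. -/
def IsDominating {V : Type*} (G : SimpleGraph V) (S : Set V) : Prop :=
  ∀ v, v ∈ S ∨ ∃ u ∈ S, G.Adj u v

/-- The domination number: minimum cardinality of a (finite) dominating set. -/
noncomputable def gamma {V : Type*} (G : SimpleGraph V) : ℕ :=
  sInf {m | ∃ S : Finset V, IsDominating G ↑S ∧ S.card = m}

open Finset
open scoped Classical

lemma zmod_facts {n k : ℕ} (hn : 3 ≤ n) (hk1 : 1 ≤ k) (hk2 : 2 * k < n) :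
    (1 : ZMod n) ≠ 0 ∧ (2 : ZMod n) ≠ 0 ∧ (k : ZMod n) ≠ 0 ∧ (k : ZMod n) + k ≠ 0 := by
  haveI : NeZero n := ⟨by omega⟩
  refine ⟨?_, ?_, ?_, ?_⟩
  · intro h
    have : ((1:ℕ) : ZMod n) = 0 := by exact_mod_cast h
    have := Nat.le_of_dvd (by omega) ((ZMod.natCast_eq_zero_iff 1 n).mp this)
    omega
  · intro h
    have : ((2:ℕ) : ZMod n) = 0 := by exact_mod_cast h
    have := Nat.le_of_dvd (by omega) ((ZMod.natCast_eq_zero_iff 2 n).mp this)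
    omega
  · intro h
    have := Nat.le_of_dvd (by omega) ((ZMod.natCast_eq_zero_iff k n).mp h)
    omega
  · intro h
    have : ((k + k : ℕ) : ZMod n) = 0 := by push_cast; exact h
    have := Nat.le_of_dvd (by omega) ((ZMod.natCast_eq_zero_iff (k+k) n).mp this)
    omega

lemma fiber_out_inl {n k : ℕ} [NeZero n] (h1 : (1:ZMod n) ≠ 0) (h2 : (2:ZMod n) ≠ 0) (i0 : ZMod n) :
    (univ.filter (fun i : ZMod n => (Sum.inl i0 : ZMod n ⊕ ZMod n) = Sum.inl i ∨
      (petersen n k).Adj (Sum.inl i0) (Sum.inl i))).card = 3 := by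
  have e1 : i0 - 1 ≠ i0 := fun h => h1 (by linear_combination -h)
  have e2 : i0 ≠ i0 + 1 := fun h => h1 (by linear_combination -h)
  have e3 : i0 - 1 ≠ i0 + 1 := fun h => h2 (by linear_combination -h)
  have he : (univ.filter (fun i : ZMod n => (Sum.inl i0 : ZMod n ⊕ ZMod n) = Sum.inl i ∨
      (petersen n k).Adj (Sum.inl i0) (Sum.inl i))) = {i0 - 1, i0, i0 + 1} := by
    ext i
    simp only [mem_filter, mem_univ, true_and, mem_insert, mem_singleton,
      petersen, SimpleGraph.fromRel_adj, Sum.inl.injEq, ne_eq]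
    constructor
    · rintro (rfl | ⟨hne, rfl | h⟩)
      · right; left; rfl
      · right; right; rfl
      · left; rw [eq_sub_iff_add_eq]; exact h.symm
    · rintro (rfl | rfl | rfl)
      · exact Or.inr ⟨fun h => e1.symm h, Or.inr (by ring)⟩
      · exact Or.inl rfl
      · exact Or.inr ⟨e2, Or.inl rfl⟩
  rw [he, card_insert_of_notMem, card_insert_of_notMem, card_singleton]
  · simpa using e2
  · simp only [mem_insert, mem_singleton]
    rintro (h | h)
    · exact e1 h
    · exact e3 h

lemma fiber_out_inr {n k : ℕ} [NeZero n] (i0 : ZMod n) :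
    (univ.filter (fun i : ZMod n => (Sum.inr i0 : ZMod n ⊕ ZMod n) = Sum.inl i ∨
      (petersen n k).Adj (Sum.inr i0) (Sum.inl i))).card = 1 := by
  have he : (univ.filter (fun i : ZMod n => (Sum.inr i0 : ZMod n ⊕ ZMod n) = Sum.inl i ∨
      (petersen n k).Adj (Sum.inr i0) (Sum.inl i))) = ({i0} : Finset (ZMod n)) := by
    ext i
    simp only [mem_filter, mem_univ, true_and, mem_singleton,
      petersen, SimpleGraph.fromRel_adj, ne_eq]
    constructor
    · rintro (h | ⟨hne, h | h⟩) <;> first | exact h.symm | exact (Sum.inr_ne_inl h).elim | exact h.elim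
    · rintro rfl; exact Or.inr ⟨Sum.inr_ne_inl, Or.inr rfl⟩
  rw [he, card_singleton]

lemma fiber_in_inl {n k : ℕ} [NeZero n] (i0 : ZMod n) :
    (univ.filter (fun i : ZMod n => (Sum.inl i0 : ZMod n ⊕ ZMod n) = Sum.inr i ∨
      (petersen n k).Adj (Sum.inl i0) (Sum.inr i))).card = 1 := by
  have he : (univ.filter (fun i : ZMod n => (Sum.inl i0 : ZMod n ⊕ ZMod n) = Sum.inr i ∨
      (petersen n k).Adj (Sum.inl i0) (Sum.inr i))) = ({i0} : Finset (ZMod n)) := by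
    ext i
    simp only [mem_filter, mem_univ, true_and, mem_singleton,
      petersen, SimpleGraph.fromRel_adj, ne_eq]
    constructor
    · rintro (h | ⟨hne, h | h⟩)
      · exact (Sum.inl_ne_inr h).elim
      · exact h
      · exact h.elim
    · rintro rfl; exact Or.inr ⟨Sum.inl_ne_inr, Or.inl rfl⟩
  rw [he, card_singleton]

lemma fiber_in_inr {n k : ℕ} [NeZero n] (hk : (k:ZMod n) ≠ 0) (h2k : (k:ZMod n) + k ≠ 0) (i0 : ZMod n) :
    (univ.filter (fun i : ZMod n => (Sum.inr i0 : ZMod n ⊕ ZMod n) = Sum.inr i ∨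
      (petersen n k).Adj (Sum.inr i0) (Sum.inr i))).card = 3 := by
  have e1 : i0 - k ≠ i0 := fun h => hk (by linear_combination -h)
  have e2 : i0 ≠ i0 + k := fun h => hk (by linear_combination -h)
  have e3 : i0 - k ≠ i0 + k := fun h => h2k (by linear_combination -h)
  have he : (univ.filter (fun i : ZMod n => (Sum.inr i0 : ZMod n ⊕ ZMod n) = Sum.inr i ∨
      (petersen n k).Adj (Sum.inr i0) (Sum.inr i))) = {i0 - k, i0, i0 + k} := by
    ext i
    simp only [mem_filter, mem_univ, true_and, mem_insert, mem_singleton,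
      petersen, SimpleGraph.fromRel_adj, Sum.inr.injEq, ne_eq]
    constructor
    · rintro (rfl | ⟨hne, rfl | h⟩)
      · right; left; rfl
      · right; right; rfl
      · left; rw [eq_sub_iff_add_eq]; exact h.symm
    · rintro (rfl | rfl | rfl)
      · exact Or.inr ⟨fun h => e1.symm h, Or.inr (by ring)⟩
      · exact Or.inl rfl
      · exact Or.inr ⟨e2, Or.inl rfl⟩
  rw [he, card_insert_of_notMem, card_insert_of_notMem, card_singleton]
  · simpa using e2
  · simp only [mem_insert, mem_singleton]
    rintro (h | h)
    · exact e1 h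
    · exact e3 h

lemma card4 {V : Type*} [DecidableEq V] (a b c d : V) : ({a,b,c,d} : Finset V).card ≤ 4 := by
  apply le_trans (Finset.card_insert_le _ _)
  apply Nat.succ_le_succ
  apply le_trans (Finset.card_insert_le _ _)
  apply Nat.succ_le_succ
  apply le_trans (Finset.card_insert_le _ _)
  apply Nat.succ_le_succ
  simp

lemma nbhd_le_four {n k : ℕ} [NeZero n] (s : ZMod n ⊕ ZMod n) :
    (univ.filter (fun v => s = v ∨ (petersen n k).Adj s v)).card ≤ 4 := by
  cases s with
  | inl i =>
    refine le_trans (Finset.card_le_card (?_ :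
      _ ⊆ ({Sum.inl (i-1), Sum.inl i, Sum.inl (i+1), Sum.inr i} : Finset (ZMod n ⊕ ZMod n)))) (card4 _ _ _ _)
    intro v hv
    simp only [mem_filter, mem_univ, true_and] at hv
    cases v with
    | inl j =>
      simp only [petersen, SimpleGraph.fromRel_adj, Sum.inl.injEq, ne_eq] at hv
      simp only [mem_insert, mem_singleton, Sum.inl.injEq]
      rcases hv with rfl | ⟨hne, rfl | h⟩
      · right; left; rfl
      · right; right; left; rfl
      · left; rw [eq_sub_iff_add_eq]; exact h.symm
    | inr j =>
      simp only [petersen, SimpleGraph.fromRel_adj, ne_eq] at hv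
      simp only [mem_insert, mem_singleton, Sum.inr.injEq]
      rcases hv with h | ⟨hne, h | h⟩
      · exact (Sum.inl_ne_inr h).elim
      · right; right; right; exact h
      · exact h.elim
  | inr i =>
    refine le_trans (Finset.card_le_card (?_ :
      _ ⊆ ({Sum.inl i, Sum.inr (i-k), Sum.inr i, Sum.inr (i+k)} : Finset (ZMod n ⊕ ZMod n)))) (card4 _ _ _ _)
    intro v hv
    simp only [mem_filter, mem_univ, true_and] at hv
    cases v with
    | inl j =>
      simp only [petersen, SimpleGraph.fromRel_adj, ne_eq] at hv
      simp only [mem_insert, mem_singleton, Sum.inl.injEq]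
      rcases hv with h | ⟨hne, h | h⟩
      · exact (Sum.inr_ne_inl h).elim
      · exact h.elim
      · left; exact h.symm
    | inr j =>
      simp only [petersen, SimpleGraph.fromRel_adj, Sum.inr.injEq, ne_eq] at hv
      simp only [mem_insert, mem_singleton, Sum.inr.injEq]
      rcases hv with rfl | ⟨hne, rfl | h⟩
      · right; right; left; rfl
      · right; right; right; rfl
      · right; left; rw [eq_sub_iff_add_eq]; exact h.symm

theorem efficient_dominating_petersen (n k : ℕ) (hn : 3 ≤ n) (hk1 : 1 ≤ k) (hk2 : 2 * k < n)
    (D : Set (ZMod n ⊕ ZMod n))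
    (hD : ∀ v : ZMod n ⊕ ZMod n, ∃! d, d ∈ D ∧ (d = v ∨ (petersen n k).Adj d v)) :
    gamma (petersen n k) = n / 2 ∧ n % 4 = 0 := by
  haveI : NeZero n := ⟨by omega⟩
  obtain ⟨h1, h2, hkz, h2k⟩ := zmod_facts hn hk1 hk2
  choose g hg using fun v => (hD v).exists
  have hgiff : ∀ (d : ZMod n ⊕ ZMod n), d ∈ D → ∀ v,
      (g v = d ↔ (d = v ∨ (petersen n k).Adj d v)) := by
    intro d hd v
    constructor
    · rintro rfl; exact (hg v).2
    · intro h; exact ((hD v).unique (hg v) ⟨hd, h⟩)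
  set DF := (Set.toFinite D).toFinset with hDFdef
  have hmemDF : ∀ d, d ∈ DF ↔ d ∈ D := fun d => Set.Finite.mem_toFinset _
  -- outer vertex count
  have hcardZ : (univ : Finset (ZMod n)).card = n := by rw [Finset.card_univ, ZMod.card]
  have hout : (univ : Finset (ZMod n)).card
      = ∑ d ∈ DF, (univ.filter fun i : ZMod n => g (Sum.inl i) = d).card :=
    Finset.card_eq_sum_card_fiberwise (fun i _ => (hmemDF _).mpr (hg (Sum.inl i)).1)
  have hin : (univ : Finset (ZMod n)).card
      = ∑ d ∈ DF, (univ.filter fun i : ZMod n => g (Sum.inr i) = d).card :=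
    Finset.card_eq_sum_card_fiberwise (fun i _ => (hmemDF _).mpr (hg (Sum.inr i)).1)
  have houtc : ∀ d ∈ DF, (univ.filter fun i : ZMod n => g (Sum.inl i) = d).card
      = if d.isLeft then 3 else 1 := by
    intro d hd
    have heq : (univ.filter fun i : ZMod n => g (Sum.inl i) = d)
        = (univ.filter fun i : ZMod n => d = Sum.inl i ∨ (petersen n k).Adj d (Sum.inl i)) :=
      filter_congr (fun i _ => by
        exact propext (hgiff d ((hmemDF d).mp hd) (Sum.inl i)) ▸ Iff.rfl)
    rw [heq]
    cases d with
    | inl i0 => simpa using fiber_out_inl h1 h2 i0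
    | inr i0 => simpa using fiber_out_inr i0
  have hinc : ∀ d ∈ DF, (univ.filter fun i : ZMod n => g (Sum.inr i) = d).card
      = if d.isLeft then 1 else 3 := by
    intro d hd
    have heq : (univ.filter fun i : ZMod n => g (Sum.inr i) = d)
        = (univ.filter fun i : ZMod n => d = Sum.inr i ∨ (petersen n k).Adj d (Sum.inr i)) :=
      filter_congr (fun i _ => by
        exact propext (hgiff d ((hmemDF d).mp hd) (Sum.inr i)) ▸ Iff.rfl)
    rw [heq]
    cases d with
    | inl i0 => simpa using fiber_in_inl i0
    | inr i0 => simpa using fiber_in_inr hkz h2k i0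
  set a := (DF.filter (fun d => d.isLeft = true)).card with ha
  set b := (DF.filter (fun d => ¬ d.isLeft = true)).card with hb
  have hab : a + b = DF.card := Finset.card_filter_add_card_filter_not _
  have hna : n = 3 * a + b := by
    rw [← hcardZ, hout, Finset.sum_congr rfl houtc, Finset.sum_ite, Finset.sum_const, Finset.sum_const,
      smul_eq_mul, smul_eq_mul, ha, hb]
    ring
  have hnb : n = a + 3 * b := by
    rw [← hcardZ, hin, Finset.sum_congr rfl hinc, Finset.sum_ite, Finset.sum_const, Finset.sum_const,
      smul_eq_mul, smul_eq_mul, ha, hb]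
    ring
  have hmod : n % 4 = 0 := by omega
  have hcardDF : DF.card = n / 2 := by omega
  -- DF is dominating
  have hdom : IsDominating (petersen n k) ↑DF := by
    intro v
    rcases (hg v).2 with h | h
    · left
      have : v ∈ D := h ▸ (hg v).1
      exact_mod_cast (hmemDF v).mpr this
    · right
      exact ⟨g v, by exact_mod_cast (hmemDF _).mpr (hg v).1, h⟩
  -- lower bound for any dominating set
  have hlow : ∀ m ∈ {m | ∃ S : Finset (ZMod n ⊕ ZMod n),
      IsDominating (petersen n k) ↑S ∧ S.card = m}, n / 2 ≤ m := by
    rintro m ⟨S, hS, rfl⟩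
    have hex : ∀ v, ∃ u, u ∈ S ∧ (u = v ∨ (petersen n k).Adj u v) := by
      intro v
      rcases hS v with h | ⟨u, hu, hadj⟩
      · exact ⟨v, by exact_mod_cast h, Or.inl rfl⟩
      · exact ⟨u, by exact_mod_cast hu, Or.inr hadj⟩
    choose f hf using hex
    have hcard : (univ : Finset (ZMod n ⊕ ZMod n)).card
        = ∑ s ∈ S, (univ.filter fun v => f v = s).card :=
      Finset.card_eq_sum_card_fiberwise (fun v _ => (hf v).1)
    have h2n : (univ : Finset (ZMod n ⊕ ZMod n)).card = n + n := by
      rw [Finset.card_univ, Fintype.card_sum, ZMod.card]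
    have hle : ∑ s ∈ S, (univ.filter fun v => f v = s).card ≤ ∑ _s ∈ S, 4 := by
      apply Finset.sum_le_sum
      intro s hs
      refine le_trans (Finset.card_le_card ?_) (nbhd_le_four (k := k) s)
      intro v hv
      simp only [mem_filter, mem_univ, true_and] at hv ⊢
      rw [← hv]
      exact (hf v).2
    rw [Finset.sum_const, smul_eq_mul] at hle
    have : n + n ≤ S.card * 4 := by
      calc n + n = (univ : Finset (ZMod n ⊕ ZMod n)).card := h2n.symm
        _ = _ := hcard
        _ ≤ S.card * 4 := hle
    omega
  refine ⟨le_antisymm ?_ ?_, hmod⟩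
  · exact Nat.sInf_le ⟨DF, hdom, hcardDF⟩
  · exact le_csInf ⟨DF.card, DF, hdom, rfl⟩ hlow
end

section
/- For every c ≥ 3 and odd k ≥ 3 with c ≡ 0 (mod 4), the set S = {v_{4i} : 0 ≤ i ≤ ck/4 − 1} ∪ {u_{4i+2} : 0 ≤ i ≤ ck/4 − 1} is a dominating set of P(ck, k) of size ck/2; consequently γ(P(ck,k)) ≤ ck/2. -/
open SimpleGraph

theorem petersen_upper_c0mod4 (c k : ℕ) (hc : 3 ≤ c) (hk : 3 ≤ k) (hkodd : k % 2 = 1)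
    (hc4 : c % 4 = 0) :
    IsDominating (petersen (c * k) k)
      ↑(((Finset.range (c * k / 4)).image fun i =>
          (Sum.inl ((4 * i : ℕ) : ZMod (c * k)) : ZMod (c * k) ⊕ ZMod (c * k))) ∪
        ((Finset.range (c * k / 4)).image fun i =>
          (Sum.inr ((4 * i + 2 : ℕ) : ZMod (c * k)) : ZMod (c * k) ⊕ ZMod (c * k)))) ∧
    (((Finset.range (c * k / 4)).image fun i =>
          (Sum.inl ((4 * i : ℕ) : ZMod (c * k)) : ZMod (c * k) ⊕ ZMod (c * k))) ∪
        ((Finset.range (c * k / 4)).image fun i =>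
          (Sum.inr ((4 * i + 2 : ℕ) : ZMod (c * k)) : ZMod (c * k) ⊕ ZMod (c * k)))).card
      = c * k / 2 ∧
    gamma (petersen (c * k) k) ≤ c * k / 2 := by
  set n := c * k with hn
  have hn4 : n % 4 = 0 := by
    obtain ⟨d, hd⟩ : 4 ∣ c := by omega
    have : n = 4 * (d * k) := by rw [hn, hd]; ring
    omega
  have hn9 : 9 ≤ n := le_trans (by norm_num) (Nat.mul_le_mul hc hk)
  have hkn : k < n := Nat.lt_of_lt_of_le (by omega : k < 3 * k) (Nat.mul_le_mul_right k hc)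
  haveI : NeZero n := ⟨by omega⟩
  haveI : Fact (1 < n) := ⟨by omega⟩
  have hone : (1 : ZMod n) ≠ 0 := one_ne_zero
  have hkz : (k : ZMod n) ≠ 0 := by
    intro hcon
    rw [ZMod.natCast_eq_zero_iff] at hcon
    have := Nat.le_of_dvd (by omega) hcon
    omega
  set A := ((Finset.range (n / 4)).image fun i =>
      (Sum.inl ((4 * i : ℕ) : ZMod n) : ZMod n ⊕ ZMod n)) with hA
  set B := ((Finset.range (n / 4)).image fun i =>
      (Sum.inr ((4 * i + 2 : ℕ) : ZMod n) : ZMod n ⊕ ZMod n)) with hB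
  -- membership helpers
  have hmemL : ∀ m : ℕ, m < n → m % 4 = 0 →
      (Sum.inl ((m : ℕ) : ZMod n) : ZMod n ⊕ ZMod n) ∈ A ∪ B := by
    intro m hm h4
    apply Finset.mem_union_left
    rw [hA]
    simp only [Finset.mem_image, Finset.mem_range]
    exact ⟨m / 4, by omega, by rw [show 4 * (m / 4) = m by omega]⟩
  have hmemR : ∀ m : ℕ, m < n → m % 4 = 2 →
      (Sum.inr ((m : ℕ) : ZMod n) : ZMod n ⊕ ZMod n) ∈ A ∪ B := by
    intro m hm h4
    apply Finset.mem_union_right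
    rw [hB]
    simp only [Finset.mem_image, Finset.mem_range]
    exact ⟨(m - 2) / 4, by omega, by rw [show 4 * ((m - 2) / 4) + 2 = m by omega]⟩
  -- cast helper
  have hcast : ∀ a b : ℕ, a = b ∨ a + n = b ∨ a = b + n → ((a : ℕ) : ZMod n) = b := by
    intro a b h
    rcases h with rfl | h | h
    · rfl
    · have : ((a + n : ℕ) : ZMod n) = b := by rw [h]
      rwa [Nat.cast_add, ZMod.natCast_self, add_zero] at this
    · rw [h, Nat.cast_add, ZMod.natCast_self, add_zero]
  have hdom : IsDominating (petersen n k) ↑(A ∪ B) := by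
    intro v
    cases v with
    | inl z =>
      obtain ⟨m, hm, rfl⟩ : ∃ m : ℕ, m < n ∧ ((m : ℕ) : ZMod n) = z :=
        ⟨z.val, ZMod.val_lt z, ZMod.natCast_rightInverse z⟩
      rcases (show m % 4 = 0 ∨ m % 4 = 1 ∨ m % 4 = 2 ∨ m % 4 = 3 by omega) with h|h|h|h
      · left; exact_mod_cast hmemL m hm h
      · -- dominated by outer m-1
        right
        have htc : ((m : ℕ) : ZMod n) = ((m - 1 : ℕ) : ZMod n) + 1 := by
          rw [show ((m - 1 : ℕ) : ZMod n) + 1 = ((m - 1 + 1 : ℕ) : ZMod n) by push_cast; ring,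
            show m - 1 + 1 = m by omega]
        refine ⟨Sum.inl ((m - 1 : ℕ) : ZMod n), hmemL (m - 1) (by omega) (by omega), ?_⟩
        simp only [petersen, SimpleGraph.fromRel_adj]
        refine ⟨?_, Or.inl htc⟩
        intro hcon
        simp only [Sum.inl.injEq] at hcon
        rw [hcon] at htc
        exact hone (left_eq_add.mp htc)
      · -- dominated by inner m
        right
        refine ⟨Sum.inr ((m : ℕ) : ZMod n), hmemR m hm h, ?_⟩
        simp only [petersen, SimpleGraph.fromRel_adj]
        exact ⟨by simp, Or.inr trivial⟩
      · -- dominated by outer m+1 (mod n)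
        right
        obtain ⟨t, htm, htlt, ht4⟩ :
            ∃ t : ℕ, (t = m + 1 ∨ t + n = m + 1) ∧ t < n ∧ t % 4 = 0 := by
          by_cases hlt : m + 1 < n
          · exact ⟨m + 1, Or.inl rfl, hlt, by omega⟩
          · exact ⟨m + 1 - n, Or.inr (by omega), by omega, by omega⟩
        have htc : ((t : ℕ) : ZMod n) = ((m : ℕ) : ZMod n) + 1 := by
          rw [show ((m : ℕ) : ZMod n) + 1 = ((m + 1 : ℕ) : ZMod n) by push_cast; ring]
          exact hcast t (m + 1) (by omega)
        refine ⟨Sum.inl ((t : ℕ) : ZMod n), hmemL t htlt ht4, ?_⟩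
        simp only [petersen, SimpleGraph.fromRel_adj]
        refine ⟨?_, Or.inr htc⟩
        intro hcon
        simp only [Sum.inl.injEq] at hcon
        rw [hcon] at htc
        exact hone (left_eq_add.mp htc)
    | inr z =>
      obtain ⟨m, hm, rfl⟩ : ∃ m : ℕ, m < n ∧ ((m : ℕ) : ZMod n) = z :=
        ⟨z.val, ZMod.val_lt z, ZMod.natCast_rightInverse z⟩
      rcases (show m % 2 = 0 ∨ m % 2 = 1 by omega) with h|h
      rcases (show m % 4 = 0 ∨ m % 4 = 2 by omega) with h4|h4
      · -- even, ≡0: dominated by outer m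
        right
        refine ⟨Sum.inl ((m : ℕ) : ZMod n), hmemL m hm h4, ?_⟩
        simp only [petersen, SimpleGraph.fromRel_adj]
        exact ⟨by simp, Or.inl trivial⟩
      · left; exact_mod_cast hmemR m hm h4
      · -- odd: dominated by inner m+k or m-k
        right
        by_cases h2 : (m + k) % 4 = 2
        · obtain ⟨t, htm, htlt, ht4⟩ :
              ∃ t : ℕ, (t = m + k ∨ t + n = m + k) ∧ t < n ∧ t % 4 = 2 := by
            by_cases hlt : m + k < n
            · exact ⟨m + k, Or.inl rfl, hlt, by omega⟩
            · exact ⟨m + k - n, Or.inr (by omega), by omega, by omega⟩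
          have htc : ((t : ℕ) : ZMod n) = ((m : ℕ) : ZMod n) + (k : ZMod n) := by
            rw [show ((m : ℕ) : ZMod n) + (k : ZMod n) = ((m + k : ℕ) : ZMod n) by
              push_cast; ring]
            exact hcast t (m + k) (by omega)
          refine ⟨Sum.inr ((t : ℕ) : ZMod n), hmemR t htlt ht4, ?_⟩
          simp only [petersen, SimpleGraph.fromRel_adj]
          refine ⟨?_, Or.inr htc⟩
          intro hcon
          simp only [Sum.inr.injEq] at hcon
          rw [hcon] at htc
          exact hkz (left_eq_add.mp htc)
        · obtain ⟨t, htm, htlt, ht4⟩ :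
              ∃ t : ℕ, (t + k = m ∨ t + k = m + n) ∧ t < n ∧ t % 4 = 2 := by
            by_cases hle : k ≤ m
            · exact ⟨m - k, Or.inl (by omega), by omega, by omega⟩
            · exact ⟨m + n - k, Or.inr (by omega), by omega, by omega⟩
          have htc : ((m : ℕ) : ZMod n) = ((t : ℕ) : ZMod n) + (k : ZMod n) := by
            rw [show ((t : ℕ) : ZMod n) + (k : ZMod n) = ((t + k : ℕ) : ZMod n) by
              push_cast; ring]
            exact (hcast (t + k) m (by omega)).symm
          refine ⟨Sum.inr ((t : ℕ) : ZMod n), hmemR t htlt ht4, ?_⟩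
          simp only [petersen, SimpleGraph.fromRel_adj]
          refine ⟨?_, Or.inl htc⟩
          intro hcon
          simp only [Sum.inr.injEq] at hcon
          rw [← hcon] at htc
          exact hkz (left_eq_add.mp htc)
  have hcardA : A.card = n / 4 := by
    rw [hA, Finset.card_image_of_injOn, Finset.card_range]
    intro i hi j hj hij
    simp only [Finset.mem_coe, Finset.mem_range] at hi hj
    simp only [Sum.inl.injEq] at hij
    have := congrArg ZMod.val hij
    rw [ZMod.val_cast_of_lt (by omega), ZMod.val_cast_of_lt (by omega)] at this
    omega
  have hcardB : B.card = n / 4 := by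
    rw [hB, Finset.card_image_of_injOn, Finset.card_range]
    intro i hi j hj hij
    simp only [Finset.mem_coe, Finset.mem_range] at hi hj
    simp only [Sum.inr.injEq] at hij
    have := congrArg ZMod.val hij
    rw [ZMod.val_cast_of_lt (by omega), ZMod.val_cast_of_lt (by omega)] at this
    omega
  have hdisj : Disjoint A B := by
    rw [Finset.disjoint_left]
    intro a ha hb
    rw [hA] at ha; rw [hB] at hb
    simp only [Finset.mem_image, Finset.mem_range] at ha hb
    obtain ⟨i, _, hi⟩ := ha
    obtain ⟨j, _, hj⟩ := hb
    rw [← hi] at hj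
    exact absurd hj (by simp)
  have hcard : (A ∪ B).card = n / 2 := by
    rw [Finset.card_union_of_disjoint hdisj, hcardA, hcardB]
    omega
  refine ⟨hdom, hcard, ?_⟩
  exact Nat.sInf_le ⟨A ∪ B, hdom, hcard⟩
end

section
/- For every c ≥ 3 with c ≡ 1 (mod 4) and every odd k ≥ 3, γ(P(ck,k)) ≤ (ck−1)/2 + (k+1)/2. -/
open SimpleGraph

lemma petersen_aux (n k : ℕ) (hk : 3 ≤ k) (hkodd : k % 2 = 1)
    (hn4 : n % 4 = k % 4) (hnk : 3 * k ≤ n) :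
    ∃ S : Finset (ZMod n ⊕ ZMod n), IsDominating (petersen n k) ↑S ∧
      S.card ≤ (n - 1) / 2 + (k + 1) / 2 := by
  haveI : NeZero n := ⟨by omega⟩
  haveI : Fact (1 < n) := ⟨by omega⟩
  set SO : Finset (ZMod n ⊕ ZMod n) :=
    (Finset.range (n/4+1)).image (fun j => Sum.inl ((4*j : ℕ) : ZMod n)) with hSO
  set SI : Finset (ZMod n ⊕ ZMod n) :=
    (Finset.range ((n+1)/4)).image (fun j => Sum.inr ((4*j+2 : ℕ) : ZMod n)) with hSI
  set SP1 : Finset (ZMod n ⊕ ZMod n) :=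
    (Finset.range ((k+1)/4)).image (fun t => Sum.inr (((k+2)%4 + 4*t : ℕ) : ZMod n)) with hSP1
  set SP2 : Finset (ZMod n ⊕ ZMod n) :=
    (Finset.range ((k-1)/4)).image (fun s => Sum.inr ((n - 4*(s+1) : ℕ) : ZMod n)) with hSP2
  set S : Finset (ZMod n ⊕ ZMod n) := SO ∪ SI ∪ SP1 ∪ SP2 with hS
  -- membership helpers
  have memO : ∀ m : ℕ, m < n → m % 4 = 0 →
      (Sum.inl ((m : ℕ) : ZMod n) : ZMod n ⊕ ZMod n) ∈ S := by
    intro m h1 h2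
    have hm : 4 * (m / 4) = m := by omega
    simp only [hS, Finset.mem_union, hSO, Finset.mem_image, Finset.mem_range]
    exact Or.inl (Or.inl (Or.inl ⟨m/4, by omega, by rw [hm]⟩))
  have memI : ∀ m : ℕ, m < n → m % 4 = 2 →
      (Sum.inr ((m : ℕ) : ZMod n) : ZMod n ⊕ ZMod n) ∈ S := by
    intro m h1 h2
    have hm : 4 * ((m-2) / 4) + 2 = m := by omega
    simp only [hS, Finset.mem_union, hSI, Finset.mem_image, Finset.mem_range]
    exact Or.inl (Or.inl (Or.inr ⟨(m-2)/4, by omega, by rw [hm]⟩))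
  have memP1 : ∀ m : ℕ, m < k → m % 4 = (k+2) % 4 →
      (Sum.inr ((m : ℕ) : ZMod n) : ZMod n ⊕ ZMod n) ∈ S := by
    intro m h1 h2
    have hm : (k+2) % 4 + 4 * ((m - (k+2)%4) / 4) = m := by omega
    simp only [hS, Finset.mem_union, hSP1, Finset.mem_image, Finset.mem_range]
    exact Or.inl (Or.inr ⟨(m - (k+2)%4)/4, by omega, by rw [hm]⟩)
  have memP2 : ∀ m : ℕ, n - k ≤ m → m < n → (n - m) % 4 = 0 →
      (Sum.inr ((m : ℕ) : ZMod n) : ZMod n ⊕ ZMod n) ∈ S := by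
    intro m h1 h2 h3
    have hm : n - 4 * ((n - m)/4 - 1 + 1) = m := by omega
    simp only [hS, Finset.mem_union, hSP2, Finset.mem_image, Finset.mem_range]
    exact Or.inr ⟨(n - m)/4 - 1, by omega, by rw [hm]⟩
  -- adjacency helpers
  have hk0 : ((k : ℕ) : ZMod n) ≠ 0 := by
    intro h
    have hv := ZMod.val_cast_of_lt (show k < n by omega)
    rw [h] at hv
    simp [ZMod.val_zero] at hv
    omega
  have adjOO : ∀ a b : ZMod n, b = a + 1 →
      (petersen n k).Adj (Sum.inl a) (Sum.inl b) ∧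
      (petersen n k).Adj (Sum.inl b) (Sum.inl a) := by
    intro a b h
    have hne : (Sum.inl a : ZMod n ⊕ ZMod n) ≠ Sum.inl b := by
      simp only [ne_eq, Sum.inl.injEq]
      rw [h]
      simp [left_eq_add]
    constructor
    · rw [petersen, SimpleGraph.fromRel_adj]
      exact ⟨hne, Or.inl h⟩
    · rw [petersen, SimpleGraph.fromRel_adj]
      exact ⟨hne.symm, Or.inr h⟩
  have adjII : ∀ a b : ZMod n, b = a + (k : ZMod n) →
      (petersen n k).Adj (Sum.inr a) (Sum.inr b) ∧
      (petersen n k).Adj (Sum.inr b) (Sum.inr a) := by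
    intro a b h
    have hne : (Sum.inr a : ZMod n ⊕ ZMod n) ≠ Sum.inr b := by
      simp only [ne_eq, Sum.inr.injEq]
      rw [h]
      simpa [left_eq_add] using hk0
    constructor
    · rw [petersen, SimpleGraph.fromRel_adj]
      exact ⟨hne, Or.inl h⟩
    · rw [petersen, SimpleGraph.fromRel_adj]
      exact ⟨hne.symm, Or.inr h⟩
  have adjIO : ∀ a : ZMod n,
      (petersen n k).Adj (Sum.inr a) (Sum.inl a) ∧
      (petersen n k).Adj (Sum.inl a) (Sum.inr a) := by
    intro a
    have hne : (Sum.inl a : ZMod n ⊕ ZMod n) ≠ Sum.inr a := by simp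
    constructor
    · rw [petersen, SimpleGraph.fromRel_adj]
      exact ⟨hne.symm, Or.inr rfl⟩
    · rw [petersen, SimpleGraph.fromRel_adj]
      exact ⟨hne, Or.inl rfl⟩
  have castsub : ∀ m : ℕ, n ≤ m → ((m - n : ℕ) : ZMod n) = ((m : ℕ) : ZMod n) := by
    intro m hm
    conv_rhs => rw [show m = (m - n) + n by omega]
    push_cast [ZMod.natCast_self]
    ring
  refine ⟨S, ?_, ?_⟩
  · intro v
    cases v with
    | inl z =>
      have hiz : ((z.val : ℕ) : ZMod n) = z := ZMod.natCast_zmod_val z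
      set i := z.val with hi
      have hin : i < n := ZMod.val_lt z
      have h4 : i % 4 = 0 ∨ i % 4 = 1 ∨ i % 4 = 2 ∨ i % 4 = 3 := by omega
      rcases h4 with h4 | h4 | h4 | h4
      · left
        rw [← hiz]
        exact Finset.mem_coe.2 (memO i hin h4)
      · right
        refine ⟨Sum.inl (((i-1 : ℕ)) : ZMod n), Finset.mem_coe.2 (memO (i-1) (by omega) (by omega)), ?_⟩
        refine (adjOO _ z ?_).1
        rw [← hiz, show i = (i-1)+1 by omega]
        push_cast
        ring
      · right
        refine ⟨Sum.inr (((i : ℕ)) : ZMod n), Finset.mem_coe.2 (memI i hin h4), ?_⟩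
        rw [← hiz]
        exact (adjIO _).1
      · right
        refine ⟨Sum.inl (((i+1 : ℕ)) : ZMod n), Finset.mem_coe.2 (memO (i+1) (by omega) (by omega)), ?_⟩
        refine (adjOO z _ ?_).2
        rw [← hiz]
        push_cast
        ring
    | inr z =>
      have hiz : ((z.val : ℕ) : ZMod n) = z := ZMod.natCast_zmod_val z
      set j := z.val with hj
      have hjn : j < n := ZMod.val_lt z
      have h2 : j % 2 = 0 ∨ j % 2 = 1 := by omega
      rcases h2 with h2 | h2
      · -- j even: j%4 = 0 -> spoke, j%4=2 -> in SI
        have h4 : j % 4 = 0 ∨ j % 4 = 2 := by omega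
        rcases h4 with h4 | h4
        · right
          refine ⟨Sum.inl (((j : ℕ)) : ZMod n), Finset.mem_coe.2 (memO j hjn h4), ?_⟩
          rw [← hiz]
          exact (adjIO _).2
        · left
          rw [← hiz]
          exact Finset.mem_coe.2 (memI j hjn h4)
      · -- j odd
        have h4 : (j + k) % 4 = 0 ∨ (j + k) % 4 = 2 := by omega
        rcases h4 with h4 | h4
        · -- want u_{j-k} (which is ≡ 2 mod 4); if j < k, j is a low patch
          by_cases hjk : k ≤ j
          · right
            refine ⟨Sum.inr (((j-k : ℕ)) : ZMod n), Finset.mem_coe.2 (memI (j-k) (by omega) (by omega)), ?_⟩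
            refine (adjII _ z ?_).1
            rw [← hiz]
            rw [← Nat.cast_add]
            congr 1
            omega
          · left
            rw [← hiz]
            exact Finset.mem_coe.2 (memP1 j (by omega) (by omega))
        · -- want u_{j+k}; if j+k ≥ n, j is a high patch
          by_cases hjk : j + k < n
          · right
            refine ⟨Sum.inr (((j+k : ℕ)) : ZMod n), Finset.mem_coe.2 (memI (j+k) hjk (by omega)), ?_⟩
            refine (adjII z _ ?_).2
            rw [← hiz]
            push_cast
            ring
          · left
            rw [← hiz]
            exact Finset.mem_coe.2 (memP2 j (by omega) hjn (by omega))
  · have c1 : S.card ≤ SO.card + SI.card + SP1.card + SP2.card := by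
      calc S.card ≤ (SO ∪ SI ∪ SP1).card + SP2.card := Finset.card_union_le _ _
        _ ≤ ((SO ∪ SI).card + SP1.card) + SP2.card := by
            gcongr; exact Finset.card_union_le _ _
        _ ≤ ((SO.card + SI.card) + SP1.card) + SP2.card := by
            gcongr; exact Finset.card_union_le _ _
    have c2 : SO.card ≤ n/4+1 := le_trans (Finset.card_image_le) (by simp)
    have c3 : SI.card ≤ (n+1)/4 := le_trans (Finset.card_image_le) (by simp)
    have c4 : SP1.card ≤ (k+1)/4 := le_trans (Finset.card_image_le) (by simp)
    have c5 : SP2.card ≤ (k-1)/4 := le_trans (Finset.card_image_le) (by simp)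
    omega

theorem petersen_upper_c1mod4_kodd (c k : ℕ) (hc : 3 ≤ c) (hc4 : c % 4 = 1)
    (hk : 3 ≤ k) (hkodd : k % 2 = 1) :
    gamma (petersen (c * k) k) ≤ (c * k - 1) / 2 + (k + 1) / 2 := by
  obtain ⟨a, ha⟩ : ∃ a, c = 4*a+1 := ⟨c/4, by omega⟩
  have hmul : c * k = 4*(a*k) + k := by rw [ha]; ring
  have hn4 : (c*k) % 4 = k % 4 := by omega
  have hnk : 3 * k ≤ c * k := Nat.mul_le_mul_right k hc
  obtain ⟨S, hdom, hcard⟩ := petersen_aux (c*k) k hk hkodd hn4 hnk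
  have hmem : S.card ∈ {m | ∃ T : Finset (ZMod (c*k) ⊕ ZMod (c*k)),
      IsDominating (petersen (c*k) k) ↑T ∧ T.card = m} := ⟨S, hdom, rfl⟩
  exact le_trans (Nat.sInf_le hmem) hcard
end

section
/- For every c ≥ 3 with c ≡ 2 (mod 4) and every k ≥ 3 with k ≡ 3 (mod 4), γ(P(ck,k)) ≤ ck/2 + (k−1)/2. -/
open SimpleGraph

/-! ### Auxiliary definitions -/

/-- Outer part of the dominating set (condition on the canonical index). -/
def pqO (k i : ℕ) : Prop := (i < k+1 ∧ i % 4 = 0) ∨ (k+1 ≤ i ∧ i % 4 = 2)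

/-- Inner part of the dominating set. -/
def pqI (k i : ℕ) : Prop :=
  (i < k+1 ∧ i % 4 = 2) ∨ (k+1 ≤ i ∧ i % 4 = 0) ∨ (i < 2*k+1 ∧ i % 4 = 3)

instance (k : ℕ) : DecidablePred (pqO k) := fun _ => by unfold pqO; infer_instance
instance (k : ℕ) : DecidablePred (pqI k) := fun _ => by unfold pqI; infer_instance

lemma cast_eq_of_add {n a b : ℕ} (h : a + n = b) : ((b : ZMod n)) = (a : ZMod n) := by
  subst h; push_cast; simp [ZMod.natCast_self]

lemma cast_ne_of_lt {n a b : ℕ} [NeZero n] (ha : a < n) (hb : b < n) (hne : a ≠ b) :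
    (a : ZMod n) ≠ (b : ZMod n) := by
  intro h
  apply hne
  have := congrArg ZMod.val h
  rwa [ZMod.val_cast_of_lt ha, ZMod.val_cast_of_lt hb] at this

lemma petersen_adj_oo {n k : ℕ} [NeZero n] {a b : ℕ} (ha : a < n) (hb : b < n) (hne : a ≠ b)
    (h : b = a + 1 ∨ b + n = a + 1 ∨ a = b + 1 ∨ a + n = b + 1) :
    (petersen n k).Adj (Sum.inl (a : ZMod n)) (Sum.inl (b : ZMod n)) := by
  rw [petersen, SimpleGraph.fromRel_adj]
  constructor
  · intro hcon
    exact cast_ne_of_lt ha hb hne (Sum.inl_injective hcon)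
  · rcases h with h|h|h|h
    · left; show (b : ZMod n) = (a : ZMod n) + 1
      subst h; push_cast; ring
    · left; show (b : ZMod n) = (a : ZMod n) + 1
      rw [show ((b : ZMod n)) = ((a+1 : ℕ) : ZMod n) from (cast_eq_of_add h).symm]
      push_cast; ring
    · right; show (a : ZMod n) = (b : ZMod n) + 1
      subst h; push_cast; ring
    · right; show (a : ZMod n) = (b : ZMod n) + 1
      rw [show ((a : ZMod n)) = ((b+1 : ℕ) : ZMod n) from (cast_eq_of_add h).symm]
      push_cast; ring

lemma petersen_adj_ii {n k : ℕ} [NeZero n] {a b : ℕ} (ha : a < n) (hb : b < n) (hne : a ≠ b)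
    (h : b = a + k ∨ b + n = a + k ∨ a = b + k ∨ a + n = b + k) :
    (petersen n k).Adj (Sum.inr (a : ZMod n)) (Sum.inr (b : ZMod n)) := by
  rw [petersen, SimpleGraph.fromRel_adj]
  constructor
  · intro hcon
    exact cast_ne_of_lt ha hb hne (Sum.inr_injective hcon)
  · rcases h with h|h|h|h
    · left; show (b : ZMod n) = (a : ZMod n) + (k : ZMod n)
      subst h; push_cast; ring
    · left; show (b : ZMod n) = (a : ZMod n) + (k : ZMod n)
      rw [show ((b : ZMod n)) = ((a+k : ℕ) : ZMod n) from (cast_eq_of_add h).symm]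
      push_cast; ring
    · right; show (a : ZMod n) = (b : ZMod n) + (k : ZMod n)
      subst h; push_cast; ring
    · right; show (a : ZMod n) = (b : ZMod n) + (k : ZMod n)
      rw [show ((a : ZMod n)) = ((b+k : ℕ) : ZMod n) from (cast_eq_of_add h).symm]
      push_cast; ring

lemma petersen_adj_lr {n k : ℕ} (x : ZMod n) :
    (petersen n k).Adj (Sum.inl x) (Sum.inr x) := by
  rw [petersen, SimpleGraph.fromRel_adj]
  exact ⟨by simp, Or.inl rfl⟩

lemma petersen_adj_rl {n k : ℕ} (x : ZMod n) :
    (petersen n k).Adj (Sum.inr x) (Sum.inl x) := by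
  rw [petersen, SimpleGraph.fromRel_adj]
  exact ⟨by simp, Or.inr rfl⟩

lemma zmod_filter_card (n : ℕ) [NeZero n] (q : ℕ → Prop) [DecidablePred q] :
    (Finset.univ.filter fun x : ZMod n => q x.val).card
      = ((Finset.range n).filter q).card := by
  apply Finset.card_bij (fun x _ => x.val)
  · intro a ha
    simp only [Finset.mem_filter, Finset.mem_univ, true_and] at ha
    exact Finset.mem_filter.2 ⟨Finset.mem_range.2 a.val_lt, ha⟩
  · intro a _ b _ hab
    have := congrArg (fun t : ℕ => (t : ZMod n)) hab
    simpa [ZMod.natCast_zmod_val] using this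
  · intro b hb
    simp only [Finset.mem_filter, Finset.mem_range] at hb
    exact ⟨(b : ZMod n), Finset.mem_filter.2 ⟨Finset.mem_univ _,
      by rw [ZMod.val_cast_of_lt hb.1]; exact hb.2⟩, ZMod.val_cast_of_lt hb.1⟩

lemma count_mod4 (r : ℕ) (hr : r < 4) (N : ℕ) :
    ((Finset.range N).filter fun i => i % 4 = r).card
      = N/4 + if r < N % 4 then 1 else 0 := by
  induction N with
  | zero => simp
  | succ N ih =>
    rw [Finset.range_add_one, Finset.filter_insert]
    by_cases h : N % 4 = r
    · rw [if_pos h, Finset.card_insert_of_notMem (by simp), ih]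
      split_ifs <;> omega
    · rw [if_neg h, ih]
      split_ifs <;> omega

lemma petersen_upper_aux (n k : ℕ) (hk4 : k % 4 = 3) (hn4 : n % 4 = 2) (h6 : 6*k ≤ n) :
    gamma (petersen n k) ≤ n / 2 + (k - 1) / 2 := by
  have hk3 : 3 ≤ k := by omega
  have hn : 18 ≤ n := by omega
  haveI : NeZero n := ⟨by omega⟩
  set S : Finset (ZMod n ⊕ ZMod n) :=
    ((Finset.univ.filter fun x : ZMod n => pqO k x.val).map
        ⟨Sum.inl, Sum.inl_injective⟩) ∪
    ((Finset.univ.filter fun x : ZMod n => pqI k x.val).map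
        ⟨Sum.inr, Sum.inr_injective⟩) with hS
  have memS_inl : ∀ a : ℕ, a < n → pqO k a → Sum.inl (a : ZMod n) ∈ S := by
    intro a ha hq
    rw [hS]
    refine Finset.mem_union_left _ ?_
    refine Finset.mem_map.2 ⟨(a : ZMod n), Finset.mem_filter.2 ⟨Finset.mem_univ _, ?_⟩, rfl⟩
    rwa [ZMod.val_cast_of_lt ha]
  have memS_inr : ∀ a : ℕ, a < n → pqI k a → Sum.inr (a : ZMod n) ∈ S := by
    intro a ha hq
    rw [hS]
    refine Finset.mem_union_right _ ?_
    refine Finset.mem_map.2 ⟨(a : ZMod n), Finset.mem_filter.2 ⟨Finset.mem_univ _, ?_⟩, rfl⟩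
    rwa [ZMod.val_cast_of_lt ha]
  have hdom : IsDominating (petersen n k) ↑S := by
    intro v
    obtain x | x := v
    · -- outer vertex
      obtain ⟨i, hi, rfl⟩ : ∃ i : ℕ, i < n ∧ (i : ZMod n) = x :=
        ⟨x.val, x.val_lt, ZMod.natCast_zmod_val x⟩
      by_cases hik : i < k+1
      · rcases (show i%4 = 0 ∨ i%4 = 1 ∨ i%4 = 2 ∨ i%4 = 3 by omega) with h|h|h|h
        · exact Or.inl (Finset.mem_coe.2 (memS_inl i hi (by unfold pqO; omega)))
        · exact Or.inr ⟨Sum.inl ((i-1 : ℕ) : ZMod n),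
            Finset.mem_coe.2 (memS_inl _ (by omega) (by unfold pqO; omega)),
            petersen_adj_oo (by omega) hi (by omega) (by omega)⟩
        · exact Or.inr ⟨Sum.inr ((i : ℕ) : ZMod n),
            Finset.mem_coe.2 (memS_inr i hi (by unfold pqI; omega)), petersen_adj_rl _⟩
        · exact Or.inr ⟨Sum.inr ((i : ℕ) : ZMod n),
            Finset.mem_coe.2 (memS_inr i hi (by unfold pqI; omega)), petersen_adj_rl _⟩
      · rcases (show i%4 = 0 ∨ i%4 = 1 ∨ i%4 = 2 ∨ i%4 = 3 by omega) with h|h|h|h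
        · exact Or.inr ⟨Sum.inr ((i : ℕ) : ZMod n),
            Finset.mem_coe.2 (memS_inr i hi (by unfold pqI; omega)), petersen_adj_rl _⟩
        · by_cases hlast : i = n - 1
          · exact Or.inr ⟨Sum.inl ((0 : ℕ) : ZMod n),
              Finset.mem_coe.2 (memS_inl 0 (by omega) (by unfold pqO; omega)),
              petersen_adj_oo (by omega) hi (by omega) (by omega)⟩
          · exact Or.inr ⟨Sum.inl ((i+1 : ℕ) : ZMod n),
              Finset.mem_coe.2 (memS_inl _ (by omega) (by unfold pqO; omega)),
              petersen_adj_oo (by omega) hi (by omega) (by omega)⟩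
        · exact Or.inl (Finset.mem_coe.2 (memS_inl i hi (by unfold pqO; omega)))
        · exact Or.inr ⟨Sum.inl ((i-1 : ℕ) : ZMod n),
            Finset.mem_coe.2 (memS_inl _ (by omega) (by unfold pqO; omega)),
            petersen_adj_oo (by omega) hi (by omega) (by omega)⟩
    · -- inner vertex
      obtain ⟨i, hi, rfl⟩ : ∃ i : ℕ, i < n ∧ (i : ZMod n) = x :=
        ⟨x.val, x.val_lt, ZMod.natCast_zmod_val x⟩
      by_cases hik : i < k+1
      · rcases (show i%4 = 0 ∨ i%4 = 1 ∨ i%4 = 2 ∨ i%4 = 3 by omega) with h|h|h|h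
        · exact Or.inr ⟨Sum.inl ((i : ℕ) : ZMod n),
            Finset.mem_coe.2 (memS_inl i hi (by unfold pqO; omega)), petersen_adj_lr _⟩
        · exact Or.inr ⟨Sum.inr ((n-k+i : ℕ) : ZMod n),
            Finset.mem_coe.2 (memS_inr _ (by omega) (by unfold pqI; omega)),
            petersen_adj_ii (by omega) hi (by omega) (by omega)⟩
        · exact Or.inl (Finset.mem_coe.2 (memS_inr i hi (by unfold pqI; omega)))
        · exact Or.inl (Finset.mem_coe.2 (memS_inr i hi (by unfold pqI; omega)))
      · rcases (show i%4 = 0 ∨ i%4 = 1 ∨ i%4 = 2 ∨ i%4 = 3 by omega) with h|h|h|h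
        · exact Or.inl (Finset.mem_coe.2 (memS_inr i hi (by unfold pqI; omega)))
        · by_cases hbig : i + k < n
          · exact Or.inr ⟨Sum.inr ((i+k : ℕ) : ZMod n),
              Finset.mem_coe.2 (memS_inr _ (by omega) (by unfold pqI; omega)),
              petersen_adj_ii (by omega) hi (by omega) (by omega)⟩
          · exact Or.inr ⟨Sum.inr ((i+k-n : ℕ) : ZMod n),
              Finset.mem_coe.2 (memS_inr _ (by omega) (by unfold pqI; omega)),
              petersen_adj_ii (by omega) hi (by omega) (by omega)⟩
        · exact Or.inr ⟨Sum.inl ((i : ℕ) : ZMod n),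
            Finset.mem_coe.2 (memS_inl i hi (by unfold pqO; omega)), petersen_adj_lr _⟩
        · by_cases hsmall : i < 2*k+1
          · exact Or.inl (Finset.mem_coe.2 (memS_inr i hi (by unfold pqI; omega)))
          · exact Or.inr ⟨Sum.inr ((i-k : ℕ) : ZMod n),
              Finset.mem_coe.2 (memS_inr _ (by omega) (by unfold pqI; omega)),
              petersen_adj_ii (by omega) hi (by omega) (by omega)⟩
  -- cardinality
  have hcard : S.card ≤ n / 2 + (k - 1) / 2 := by
    have hdisj : Disjoint
        ((Finset.univ.filter fun x : ZMod n => pqO k x.val).map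
          ⟨Sum.inl, Sum.inl_injective⟩)
        ((Finset.univ.filter fun x : ZMod n => pqI k x.val).map
          ⟨Sum.inr, Sum.inr_injective⟩) := by
      rw [Finset.disjoint_left]
      rintro a ha hb
      obtain ⟨y, -, rfl⟩ := Finset.mem_map.1 ha
      obtain ⟨z, -, hz⟩ := Finset.mem_map.1 hb
      simp at hz
    rw [hS, Finset.card_union_of_disjoint hdisj, Finset.card_map, Finset.card_map,
      zmod_filter_card, zmod_filter_card]
    -- split the inner filter
    set qB : ℕ → Prop := fun i => (i < k+1 ∧ i % 4 = 2) ∨ (k+1 ≤ i ∧ i % 4 = 0) with hqB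
    have hsub : (Finset.range n).filter (pqI k) ⊆
        ((Finset.range n).filter qB) ∪
        ((Finset.range n).filter fun i => i < 2*k+1 ∧ i % 4 = 3) := by
      intro a ha
      simp only [Finset.mem_filter, Finset.mem_range, Finset.mem_union, pqI, hqB] at *
      tauto
    have hI : ((Finset.range n).filter (pqI k)).card ≤
        ((Finset.range n).filter qB).card +
        ((Finset.range n).filter fun i => i < 2*k+1 ∧ i % 4 = 3).card :=
      le_trans (Finset.card_le_card hsub) (Finset.card_union_le _ _)
    have d1 : Disjoint ((Finset.range n).filter (pqO k)) ((Finset.range n).filter qB) := by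
      rw [Finset.disjoint_left]
      intro a h1 h2
      simp only [Finset.mem_filter, Finset.mem_range, pqO, hqB] at h1 h2
      omega
    have d2 : Disjoint ((Finset.range n).filter fun i => i % 4 = 0)
        ((Finset.range n).filter fun i => i % 4 = 2) := by
      rw [Finset.disjoint_left]
      intro a h1 h2
      simp only [Finset.mem_filter, Finset.mem_range] at h1 h2
      omega
    have hu : (Finset.range n).filter (pqO k) ∪ (Finset.range n).filter qB =
        ((Finset.range n).filter fun i => i % 4 = 0) ∪
        ((Finset.range n).filter fun i => i % 4 = 2) := by
      rw [← Finset.filter_or, ← Finset.filter_or]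
      ext a
      simp only [Finset.mem_filter, Finset.mem_range, pqO, hqB]
      omega
    have e2 : ((Finset.range n).filter (pqO k)).card + ((Finset.range n).filter qB).card
        = ((Finset.range n).filter fun i => i % 4 = 0).card +
          ((Finset.range n).filter fun i => i % 4 = 2).card := by
      rw [← Finset.card_union_of_disjoint d1, ← Finset.card_union_of_disjoint d2, hu]
    have e3 : ((Finset.range n).filter fun i => i < 2*k+1 ∧ i % 4 = 3) =
        ((Finset.range (2*k+1)).filter fun i => i % 4 = 3) := by
      ext a
      simp only [Finset.mem_filter, Finset.mem_range]
      omega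
    have c0 : ((Finset.range n).filter fun i => i % 4 = 0).card = n/4 + 1 := by
      rw [count_mod4 0 (by norm_num), hn4]
      norm_num
    have c2 : ((Finset.range n).filter fun i => i % 4 = 2).card = n/4 := by
      rw [count_mod4 2 (by norm_num), hn4]
      norm_num
    have c3 : ((Finset.range (2*k+1)).filter fun i => i % 4 = 3).card = (k-1)/2 := by
      rw [count_mod4 3 (by norm_num)]
      have h23 : (2*k+1) % 4 = 3 := by omega
      rw [h23]
      simp
      omega
    rw [e3, c3] at hI
    omega
  refine le_trans ?_ hcard
  exact Nat.sInf_le ⟨S, hdom, rfl⟩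

theorem petersen_upper_c2mod4_k3mod4 (c k : ℕ) (hc : 3 ≤ c) (hc4 : c % 4 = 2)
    (hk : 3 ≤ k) (hk4 : k % 4 = 3) :
    gamma (petersen (c * k) k) ≤ c * k / 2 + (k - 1) / 2 := by
  have h1 : (c * k) % 4 = 2 := by
    rw [Nat.mul_mod, hc4, hk4]
  have h2 : 6 * k ≤ c * k := Nat.mul_le_mul_right k (by omega)
  exact petersen_upper_aux (c * k) k hk4 h1 h2
end

section
/- For every even k ≥ 2, the domination number of the generalized Petersen graph P(4k,k) equals 2k+1. -/
open SimpleGraph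

open Finset
attribute [local instance] Classical.propDecidable


theorem adj_ll (n k : ℕ) (a b : ZMod n) :
    (petersen n k).Adj (Sum.inl a) (Sum.inl b) ↔ a ≠ b ∧ (b = a + 1 ∨ a = b + 1) := by
  simp [petersen, Sum.inl.injEq]
theorem adj_lr (n k : ℕ) (a b : ZMod n) :
    (petersen n k).Adj (Sum.inl a) (Sum.inr b) ↔ b = a := by simp [petersen]
theorem adj_rl (n k : ℕ) (a b : ZMod n) :
    (petersen n k).Adj (Sum.inr a) (Sum.inl b) ↔ a = b := by simp [petersen]
theorem adj_rr (n k : ℕ) (a b : ZMod n) :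
    (petersen n k).Adj (Sum.inr a) (Sum.inr b) ↔ a ≠ b ∧ (b = a + k ∨ a = b + k) := by
  simp [petersen]

section
variable (k : ℕ) (hk : 2 ≤ k)

theorem cast_ne_zero {c : ℕ} (hc : 0 < c) (hc2 : c < 4*k) : (c : ZMod (4*k)) ≠ 0 := by
  haveI : NeZero (4*k) := ⟨by omega⟩
  intro h
  rw [ZMod.natCast_eq_zero_iff] at h
  exact absurd (Nat.le_of_dvd hc h) (by omega)

include hk in
theorem one_ne (a b : ZMod (4*k)) (h : a = b + 1) : a ≠ b := by
  intro he
  have h1 : (1 : ZMod (4*k)) ≠ 0 := by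
    have := cast_ne_zero k (c := 1) (by omega) (by omega); simpa using this
  exact h1 (by linear_combination he - h)

include hk in
theorem two_ne (a b : ZMod (4*k)) (h : a = b + 2) : a ≠ b := by
  intro he
  have h2 : ((2:ℕ) : ZMod (4*k)) ≠ 0 := cast_ne_zero k (by omega) (by omega)
  push_cast at h2
  exact h2 (by linear_combination he - h)

include hk in
theorem k_ne (a b : ZMod (4*k)) (h : a = b + k) : a ≠ b := by
  intro he
  exact cast_ne_zero k (c := k) (by omega) (by omega) (by linear_combination he - h)

include hk in
theorem twok_ne (a b : ZMod (4*k)) (h : a = b + k + k) : a ≠ b := by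
  intro he
  have h2 : ((k + k : ℕ) : ZMod (4*k)) ≠ 0 := cast_ne_zero k (by omega) (by omega)
  push_cast at h2
  exact h2 (by linear_combination he - h)

include hk in
theorem nbhd_card [NeZero (4*k)] (s : ZMod (4*k) ⊕ ZMod (4*k)) :
    (Finset.univ.filter (fun v => (petersen (4*k) k).Adj s v ∨ s = v)).card = 4 := by
  obtain x | x := s
  · have hset : (Finset.univ.filter (fun v => (petersen (4*k) k).Adj (Sum.inl x) v ∨ Sum.inl x = v))
        = ({Sum.inl x, Sum.inl (x+1), Sum.inl (x-1), Sum.inr x} : Finset _) := by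
      ext v
      simp only [mem_filter, mem_univ, true_and, mem_insert, mem_singleton]
      obtain b | b := v
      · simp only [adj_ll, Sum.inl.injEq, reduceCtorEq, or_false]
        constructor
        · rintro (⟨hne, h | h⟩ | h)
          · right; left; exact h
          · right; right; rw [h]; ring
          · left; exact h.symm
        · rintro (h | h | h)
          · right; exact h.symm
          · left; exact ⟨(one_ne k hk b x h).symm, Or.inl h⟩
          · left; exact ⟨one_ne k hk x b (by rw [h]; ring), Or.inr (by rw [h]; ring)⟩
      · simp only [adj_lr, Sum.inr.injEq, reduceCtorEq, false_or, or_false]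
    rw [hset]
    have d1 : (Sum.inl x : ZMod (4*k) ⊕ ZMod (4*k)) ∉
        ({Sum.inl (x+1), Sum.inl (x-1), Sum.inr x} : Finset _) := by
      simp only [mem_insert, mem_singleton, Sum.inl.injEq, reduceCtorEq, or_false]
      push_neg
      exact ⟨(one_ne k hk _ _ rfl).symm, fun h => (one_ne k hk x (x-1) (by ring)) h⟩
    have d2 : (Sum.inl (x+1) : ZMod (4*k) ⊕ ZMod (4*k)) ∉
        ({Sum.inl (x-1), Sum.inr x} : Finset _) := by
      simp only [mem_insert, mem_singleton, Sum.inl.injEq, reduceCtorEq, or_false]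
      exact two_ne k hk _ _ (by ring)
    have d3 : (Sum.inl (x-1) : ZMod (4*k) ⊕ ZMod (4*k)) ∉ ({Sum.inr x} : Finset _) := by
      simp
    rw [card_insert_of_notMem d1, card_insert_of_notMem d2, card_insert_of_notMem d3,
      card_singleton]
  · have hset : (Finset.univ.filter (fun v => (petersen (4*k) k).Adj (Sum.inr x) v ∨ Sum.inr x = v))
        = ({Sum.inr x, Sum.inr (x+k), Sum.inr (x-k), Sum.inl x} : Finset _) := by
      ext v
      simp only [mem_filter, mem_univ, true_and, mem_insert, mem_singleton]
      obtain b | b := v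
      · simp only [adj_rl, Sum.inl.injEq, Sum.inr.injEq, reduceCtorEq, false_or, or_false]
        tauto
      · simp only [adj_rr, Sum.inr.injEq, reduceCtorEq, or_false]
        constructor
        · rintro (⟨hne, h | h⟩ | h)
          · right; left; exact h
          · right; right; rw [h]; ring
          · left; exact h.symm
        · rintro (h | h | h)
          · right; exact h.symm
          · left; exact ⟨(k_ne k hk b x h).symm, Or.inl h⟩
          · left; exact ⟨k_ne k hk x b (by rw [h]; ring), Or.inr (by rw [h]; ring)⟩
    rw [hset]
    have d1 : (Sum.inr x : ZMod (4*k) ⊕ ZMod (4*k)) ∉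
        ({Sum.inr (x+k), Sum.inr (x-k), Sum.inl x} : Finset _) := by
      simp only [mem_insert, mem_singleton, Sum.inr.injEq, reduceCtorEq, or_false]
      push_neg
      exact ⟨(k_ne k hk _ _ rfl).symm, fun h => (k_ne k hk x (x-k) (by ring)) h⟩
    have d2 : (Sum.inr (x+k) : ZMod (4*k) ⊕ ZMod (4*k)) ∉
        ({Sum.inr (x-k), Sum.inl x} : Finset _) := by
      simp only [mem_insert, mem_singleton, Sum.inr.injEq, reduceCtorEq, or_false]
      exact twok_ne k hk _ _ (by ring)
    have d3 : (Sum.inr (x-k) : ZMod (4*k) ⊕ ZMod (4*k)) ∉ ({Sum.inl x} : Finset _) := by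
      simp
    rw [card_insert_of_notMem d1, card_insert_of_notMem d2, card_insert_of_notMem d3,
      card_singleton]
end

section
variable (k : ℕ) (hk : 2 ≤ k)

include hk in
theorem exact_dom [NeZero (4*k)] (S : Finset (ZMod (4*k) ⊕ ZMod (4*k)))
    (hdom : IsDominating (petersen (4*k) k) ↑S) (hcard : S.card ≤ 2*k) :
    ∀ v, (S.filter (fun s => (petersen (4*k) k).Adj s v ∨ s = v)).card = 1 := by
  set G := petersen (4*k) k with hG
  set c : ZMod (4*k) ⊕ ZMod (4*k) → ℕ :=
    fun v => (S.filter (fun s => G.Adj s v ∨ s = v)).card with hc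
  have h1 : ∀ v, 1 ≤ c v := by
    intro v
    rw [hc, Nat.one_le_iff_ne_zero, ← Nat.pos_iff_ne_zero, Finset.card_pos]
    rcases hdom v with hv | ⟨u, hu, hadj⟩
    · exact ⟨v, Finset.mem_filter.mpr ⟨hv, Or.inr rfl⟩⟩
    · exact ⟨u, Finset.mem_filter.mpr ⟨hu, Or.inl hadj⟩⟩
  have hsum : ∑ v, c v = 4 * S.card := by
    have : ∀ v, c v = ∑ s ∈ S, if G.Adj s v ∨ s = v then 1 else 0 := by
      intro v; rw [hc]; exact Finset.card_filter _ _
    rw [Finset.sum_congr rfl (fun v _ => this v), Finset.sum_comm]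
    have : ∀ s ∈ S, (∑ v, if G.Adj s v ∨ s = v then 1 else 0) = 4 := by
      intro s _
      rw [← Finset.card_filter]
      exact nbhd_card k hk s
    rw [Finset.sum_congr rfl this, Finset.sum_const, smul_eq_mul, mul_comm]
  have hcards : Fintype.card (ZMod (4*k) ⊕ ZMod (4*k)) = 8*k := by
    rw [Fintype.card_sum, ZMod.card]; omega
  have htot : ∑ v, c v = 8*k := by
    have hub : ∑ v, c v ≤ 8*k := by rw [hsum]; omega
    have hlb : 8*k ≤ ∑ v, c v := by
      calc 8*k = ∑ _v : ZMod (4*k) ⊕ ZMod (4*k), 1 := by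
                rw [Finset.sum_const, smul_eq_mul, mul_one, Finset.card_univ, hcards]
        _ ≤ ∑ v, c v := Finset.sum_le_sum (fun v _ => h1 v)
    omega
  intro v
  by_contra hne
  have hne' : c v ≠ 1 := hne
  have h2 : 2 ≤ c v := by have := h1 v; omega
  have : ∑ w, (fun w => if w = v then 1 else c w) w < ∑ w, c w := by
    apply Finset.sum_lt_sum
    · intro i _; by_cases hi : i = v
      · subst hi; rw [if_pos rfl]; exact h1 i
      · rw [if_neg hi]
    · exact ⟨v, Finset.mem_univ v, by rw [if_pos rfl]; omega⟩
  have hge : ∀ w, 1 ≤ (fun w => if w = v then 1 else c w) w := by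
    intro w
    show 1 ≤ if w = v then 1 else c w
    by_cases hw : w = v
    · rw [if_pos hw]
    · rw [if_neg hw]; exact h1 w
  have : 8*k < 8*k := by
    calc 8*k = ∑ _v : ZMod (4*k) ⊕ ZMod (4*k), 1 := by
              rw [Finset.sum_const, smul_eq_mul, mul_one, Finset.card_univ, hcards]
      _ ≤ ∑ w, (fun w => if w = v then 1 else c w) w := Finset.sum_le_sum (fun w _ => hge w)
      _ < ∑ w, c w := this
      _ = 8*k := htot
  omega
end

section
variable {N : ℕ}

/-- indicator of outer membership -/
def fI (S : Finset (ZMod N ⊕ ZMod N)) (x : ZMod N) : ℕ := if Sum.inl x ∈ S then 1 else 0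
/-- indicator of inner membership -/
def gI (S : Finset (ZMod N ⊕ ZMod N)) (x : ZMod N) : ℕ := if Sum.inr x ∈ S then 1 else 0

theorem fI_le (S : Finset (ZMod N ⊕ ZMod N)) (x : ZMod N) : fI S x ≤ 1 := by
  unfold fI; split <;> omega
theorem gI_le (S : Finset (ZMod N ⊕ ZMod N)) (x : ZMod N) : gI S x ≤ 1 := by
  unfold gI; split <;> omega

theorem card_filter_mem4 {V : Type*} [DecidableEq V] (S : Finset V) (a b c d : V)
    (hab : a ≠ b) (hac : a ≠ c) (had : a ≠ d) (hbc : b ≠ c) (hbd : b ≠ d) (hcd : c ≠ d) :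
    (S.filter (· ∈ ({a,b,c,d} : Finset V))).card =
      (if a ∈ S then 1 else 0) + (if b ∈ S then 1 else 0)
      + (if c ∈ S then 1 else 0) + (if d ∈ S then 1 else 0) := by
  rw [Finset.filter_mem_eq_inter, Finset.inter_comm, ← Finset.filter_mem_eq_inter,
    Finset.card_filter]
  rw [Finset.sum_insert (by simp [hab, hac, had]),
    Finset.sum_insert (by simp [hbc, hbd]),
    Finset.sum_insert (by simp [hcd]), Finset.sum_singleton]
  ring
end

section
variable (k : ℕ) (hk : 2 ≤ k) [NeZero (4*k)]
  (S : Finset (ZMod (4*k) ⊕ ZMod (4*k)))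
  (hx : ∀ v, (S.filter (fun s => (petersen (4*k) k).Adj s v ∨ s = v)).card = 1)

omit [NeZero (4*k)] in
include hk hx in
theorem eqO : ∀ x : ZMod (4*k),
    fI S (x-1) + fI S x + fI S (x+1) + gI S x = 1 := by
  intro x
  have h := hx (Sum.inl x)
  have hfe : S.filter (fun s => (petersen (4*k) k).Adj s (Sum.inl x) ∨ s = Sum.inl x)
      = S.filter (· ∈ ({Sum.inl (x-1), Sum.inl x, Sum.inl (x+1), Sum.inr x} :
          Finset (ZMod (4*k) ⊕ ZMod (4*k)))) := by
    apply Finset.filter_congr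
    intro s _
    obtain b | b := s
    · simp only [adj_ll, mem_insert, mem_singleton, Sum.inl.injEq, Sum.inr.injEq,
        reduceCtorEq, or_false]
      constructor
      · rintro (⟨hne, h1 | h1⟩ | h1)
        · left; rw [h1]; ring
        · right; right; exact h1
        · right; left; exact h1
      · rintro (h1 | h1 | h1)
        · left; exact ⟨(one_ne k hk x b (by rw [h1]; ring)).symm, Or.inl (by rw [h1]; ring)⟩
        · right; exact h1
        · left; exact ⟨one_ne k hk b x h1, Or.inr h1⟩
    · simp only [adj_rl, mem_insert, mem_singleton, Sum.inl.injEq, Sum.inr.injEq,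
        reduceCtorEq, false_or, or_false]
  rw [hfe, card_filter_mem4 S _ _ _ _
      (by simp only [ne_eq, Sum.inl.injEq]; exact (one_ne k hk x (x-1) (by ring)).symm)
      (by simp only [ne_eq, Sum.inl.injEq]; exact (two_ne k hk (x+1) (x-1) (by ring)).symm)
      (by simp)
      (by simp only [ne_eq, Sum.inl.injEq]; exact (one_ne k hk (x+1) x rfl).symm)
      (by simp) (by simp)] at h
  exact h

omit [NeZero (4*k)] in
include hk hx in
theorem eqI : ∀ x : ZMod (4*k),
    gI S (x-k) + gI S x + gI S (x+k) + fI S x = 1 := by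
  intro x
  have h := hx (Sum.inr x)
  have hfe : S.filter (fun s => (petersen (4*k) k).Adj s (Sum.inr x) ∨ s = Sum.inr x)
      = S.filter (· ∈ ({Sum.inr (x-k), Sum.inr x, Sum.inr (x+k), Sum.inl x} :
          Finset (ZMod (4*k) ⊕ ZMod (4*k)))) := by
    apply Finset.filter_congr
    intro s _
    obtain b | b := s
    · simp only [adj_lr, mem_insert, mem_singleton, Sum.inl.injEq, Sum.inr.injEq,
        reduceCtorEq, false_or, or_false]
      exact eq_comm
    · simp only [adj_rr, mem_insert, mem_singleton, Sum.inl.injEq, Sum.inr.injEq,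
        reduceCtorEq, or_false]
      constructor
      · rintro (⟨hne, h1 | h1⟩ | h1)
        · left; rw [h1]; ring
        · right; right; exact h1
        · right; left; exact h1
      · rintro (h1 | h1 | h1)
        · left; exact ⟨(k_ne k hk x b (by rw [h1]; ring)).symm, Or.inl (by rw [h1]; ring)⟩
        · right; exact h1
        · left; exact ⟨k_ne k hk b x h1, Or.inr h1⟩
  rw [hfe, card_filter_mem4 S _ _ _ _
      (by simp only [ne_eq, Sum.inr.injEq]; exact (k_ne k hk x (x-k) (by ring)).symm)
      (by simp only [ne_eq, Sum.inr.injEq]; exact (twok_ne k hk (x+k) (x-k) (by ring)).symm)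
      (by simp)
      (by simp only [ne_eq, Sum.inr.injEq]; exact (k_ne k hk (x+k) x rfl).symm)
      (by simp) (by simp)] at h
  exact h
end

section
theorem all_one {n : ℕ} [NeZero n] (A : ZMod n → ℕ) (hle : ∀ x, A x ≤ 1)
    (hsum : ∑ x, A x = n) : ∀ x, A x = 1 := by
  by_contra hc
  push_neg at hc
  obtain ⟨x0, hx0⟩ := hc
  have hlt : ∑ x, A x < ∑ _x : ZMod n, 1 := by
    apply Finset.sum_lt_sum (fun i _ => hle i)
    exact ⟨x0, Finset.mem_univ x0, by have := hle x0; omega⟩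
  rw [Finset.sum_const, smul_eq_mul, mul_one, Finset.card_univ, ZMod.card] at hlt
  omega

theorem lower_card (k : ℕ) (hk : 2 ≤ k) (hkeven : k % 2 = 0) [NeZero (4*k)]
    (S : Finset (ZMod (4*k) ⊕ ZMod (4*k))) (hdom : IsDominating (petersen (4*k) k) ↑S) :
    2*k+1 ≤ S.card := by
  by_contra hlt
  push_neg at hlt
  have hcard : S.card ≤ 2*k := by omega
  have hx := exact_dom k hk S hdom hcard
  have hO := eqO k hk S hx
  have hI := eqI k hk S hx
  have hfle : ∀ x, fI S x ≤ 1 := fI_le S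
  have hgle : ∀ x, gI S x ≤ 1 := gI_le S
  have hz : (4 : ZMod (4*k)) * (k : ZMod (4*k)) = 0 := by
    have := ZMod.natCast_self (4*k); push_cast at this; exact this
  have hshift : ∀ (c : ZMod (4*k)) (h : ZMod (4*k) → ℕ), ∑ x, h (x + c) = ∑ x, h x := by
    intro c h; exact Equiv.sum_comp (Equiv.addRight c) h
  have hone : ∑ _x : ZMod (4*k), 1 = 4*k := by
    rw [Finset.sum_const, smul_eq_mul, mul_one, Finset.card_univ, ZMod.card]
  -- sums of the two equation families
  have hOsum : (∑ x : ZMod (4*k), fI S x) * 3 + (∑ x : ZMod (4*k), gI S x) = 4*k := by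
    have h1 : ∑ x : ZMod (4*k), (fI S (x-1) + fI S x + fI S (x+1) + gI S x) = 4*k := by
      rw [Finset.sum_congr rfl (fun x _ => hO x), hone]
    rw [Finset.sum_add_distrib, Finset.sum_add_distrib, Finset.sum_add_distrib] at h1
    have e1 : ∑ x : ZMod (4*k), fI S (x-1) = ∑ x : ZMod (4*k), fI S x := by
      rw [← hshift (-1) (fI S)]; apply Finset.sum_congr rfl; intro x _; rw [sub_eq_add_neg]
    have e2 : ∑ x : ZMod (4*k), fI S (x+1) = ∑ x : ZMod (4*k), fI S x := hshift 1 (fI S)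
    rw [e1, e2] at h1; omega
  have hIsum : (∑ x : ZMod (4*k), gI S x) * 3 + (∑ x : ZMod (4*k), fI S x) = 4*k := by
    have h1 : ∑ x : ZMod (4*k), (gI S (x-k) + gI S x + gI S (x+k) + fI S x) = 4*k := by
      rw [Finset.sum_congr rfl (fun x _ => hI x), hone]
    rw [Finset.sum_add_distrib, Finset.sum_add_distrib, Finset.sum_add_distrib] at h1
    have e1 : ∑ x : ZMod (4*k), gI S (x-k) = ∑ x : ZMod (4*k), gI S x := by
      rw [← hshift (-k) (gI S)]; apply Finset.sum_congr rfl; intro x _; rw [sub_eq_add_neg]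
    have e2 : ∑ x : ZMod (4*k), gI S (x+k) = ∑ x : ZMod (4*k), gI S x := hshift k (gI S)
    rw [e1, e2] at h1; omega
  have hG : ∑ x : ZMod (4*k), gI S x = k := by omega
  -- the inner-class function A
  set A : ZMod (4*k) → ℕ :=
    fun x => gI S x + gI S (x + k) + gI S (x + 2*k) + gI S (x + 3*k) with hA
  have hAle : ∀ x, A x ≤ 1 := by
    intro x
    have e0 := hI (x + k)
    rw [show x + (k:ZMod (4*k)) - k = x from by ring,
      show x + (k:ZMod (4*k)) + k = x + 2*k from by ring] at e0
    have e2 := hI (x + 2*(k:ZMod (4*k)))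
    rw [show x + 2*(k:ZMod (4*k)) - k = x + k from by ring,
      show x + 2*(k:ZMod (4*k)) + k = x + 3*k from by ring] at e2
    have e1 := hI (x + 3*(k:ZMod (4*k)))
    rw [show x + 3*(k:ZMod (4*k)) - k = x + 2*k from by ring,
      show x + 3*(k:ZMod (4*k)) + k = x from by linear_combination hz] at e1
    simp only [hA]
    omega
  have hAsum : ∑ x, A x = 4*k := by
    simp only [hA]
    rw [Finset.sum_add_distrib, Finset.sum_add_distrib, Finset.sum_add_distrib,
      hshift (k:ZMod (4*k)) (gI S), hshift (2*(k:ZMod (4*k))) (gI S),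
      hshift (3*(k:ZMod (4*k))) (gI S), hG]
    omega
  have hA1 : ∀ x, A x = 1 := all_one A hAle hAsum
  -- f = g shifted
  have hfg : ∀ x, fI S x = gI S (x + 2*k) := by
    intro x
    have e := hI x
    have a := hA1 (x - k)
    simp only [hA] at a
    rw [show x - (k:ZMod (4*k)) + k = x from by ring,
      show x - (k:ZMod (4*k)) + 2*k = x + k from by ring,
      show x - (k:ZMod (4*k)) + 3*k = x + 2*k from by ring] at a
    omega
  have hE : ∀ x, fI S (x-1) + fI S x + fI S (x+1) + fI S (x + 2*k) = 1 := by
    intro x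
    have h2 := hfg (x + 2*(k:ZMod (4*k)))
    rw [show x + 2*(k:ZMod (4*k)) + 2*k = x from by linear_combination hz] at h2
    have := hO x
    omega
  have hCf : ∀ x, fI S x + fI S (x + k) + fI S (x + 2*k) + fI S (x + 3*k) = 1 := by
    intro x
    have a := hA1 x
    simp only [hA] at a
    have e0 := hfg x
    have e1 := hfg (x + (k:ZMod (4*k)))
    rw [show x + (k:ZMod (4*k)) + 2*k = x + 3*k from by ring] at e1
    have e2 := hfg (x + 2*(k:ZMod (4*k)))
    rw [show x + 2*(k:ZMod (4*k)) + 2*k = x from by linear_combination hz] at e2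
    have e3 := hfg (x + 3*(k:ZMod (4*k)))
    rw [show x + 3*(k:ZMod (4*k)) + 2*k = x + k from by linear_combination hz] at e3
    omega
  -- pointwise propagation lemmas
  have hstep : ∀ x, fI S x = 1 →
      fI S (x + ((k:ZMod (4*k))+1)) + fI S (x + (3*(k:ZMod (4*k))+1)) = 1 := by
    intro x hx1
    have c := hCf (x+1)
    rw [show x + 1 + (k:ZMod (4*k)) = x + ((k:ZMod (4*k))+1) from by ring,
      show x + 1 + 2*(k:ZMod (4*k)) = x + (2*(k:ZMod (4*k))+1) from by ring,
      show x + 1 + 3*(k:ZMod (4*k)) = x + (3*(k:ZMod (4*k))+1) from by ring] at c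
    have e := hE x
    have e2 := hE (x + 2*(k:ZMod (4*k)))
    rw [show x + 2*(k:ZMod (4*k)) + 1 = x + (2*(k:ZMod (4*k))+1) from by ring,
      show x + 2*(k:ZMod (4*k)) + 2*k = x from by linear_combination hz] at e2
    omega
  have hstep2 : ∀ x, fI S x = 1 → fI S (x + 2) = 0 := by
    intro x hx1
    have e := hE (x+1)
    rw [show x + 1 - 1 = x from by ring, show x + 1 + 1 = x + 2 from by ring] at e
    omega
  -- generic contradiction driver
  have driver : ∀ (dnat : ℕ) (_ : Nat.Coprime dnat (4*k))
      (d : ZMod (4*k)) (_ : ((dnat : ℕ) : ZMod (4*k)) = d)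
      (_ : ∀ x, fI S x = 1 → fI S (x + d) = 1 → fI S (x + d + d) = 1)
      (x0 : ZMod (4*k)) (_ : fI S x0 = 1) (_ : fI S (x0 + d) = 1), False := by
    intro dnat hcop d hd hprop x0 h0 h1
    have hall : ∀ m : ℕ, fI S (x0 + (m : ZMod (4*k)) * d) = 1 ∧
        fI S (x0 + ((m+1 : ℕ) : ZMod (4*k)) * d) = 1 := by
      intro m
      induction m with
      | zero =>
        constructor
        · simpa using h0
        · simpa using h1
      | succ m ih =>
        refine ⟨ih.2, ?_⟩
        have := hprop (x0 + (m : ZMod (4*k)) * d) ih.1 ?_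
        · rw [show x0 + ((m+1+1 : ℕ) : ZMod (4*k)) * d
            = x0 + (m : ZMod (4*k)) * d + d + d from by push_cast; ring]
          exact this
        · rw [show x0 + ((m+1 : ℕ) : ZMod (4*k)) * d
            = x0 + (m : ZMod (4*k)) * d + d from by push_cast; ring] at ih
          exact ih.2
    have hunit : IsUnit ((dnat : ℕ) : ZMod (4*k)) := by
      rw [ZMod.isUnit_iff_coprime]
      exact hcop
    obtain ⟨u, hu⟩ := hunit
    have hm := (hall ((u⁻¹ : (ZMod (4*k))ˣ) : ZMod (4*k)).val).1
    have hval : (((((u⁻¹ : (ZMod (4*k))ˣ) : ZMod (4*k))).val : ℕ) : ZMod (4*k))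
        = ((u⁻¹ : (ZMod (4*k))ˣ) : ZMod (4*k)) := by
      simp [ZMod.natCast_val, ZMod.cast_id]
    rw [hval, ← hd, ← hu] at hm
    rw [show x0 + ((u⁻¹ : (ZMod (4*k))ˣ) : ZMod (4*k)) * (u : ZMod (4*k)) = x0 + 1 from by
      rw [Units.inv_mul]] at hm
    have e := hE x0
    omega
  -- choose a starting point
  have hex : ∃ x, fI S x = 1 := by
    by_contra hno
    push_neg at hno
    have hall0 : ∀ y, fI S y = 0 := fun y => by have := hfle y; have := hno y; omega
    have c := hCf 0
    simp only [hall0] at c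
    omega
  obtain ⟨x0, hx0⟩ := hex
  have hd := hstep x0 hx0
  by_cases hb : fI S (x0 + ((k:ZMod (4*k))+1)) = 1
  · -- right direction, d = k+1
    have hcop : Nat.Coprime (k+1) (4*k) := by
      have h4 : Nat.Coprime (k+1) 4 := by
        have hodd : (k+1) % 2 = 1 := by omega
        have h2 : Nat.Coprime (k+1) 2 := by
          rw [Nat.coprime_two_right, Nat.odd_iff]; exact hodd
        have : (4:ℕ) = 2*2 := by norm_num
        rw [this]
        exact Nat.Coprime.mul_right h2 h2
      exact Nat.Coprime.mul_right h4 (by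
        have h11 : k+1 = 1 + k*1 := by ring
        rw [h11, Nat.coprime_add_mul_left_left]
        exact Nat.coprime_one_left k)
    have hprop : ∀ x, fI S x = 1 → fI S (x + ((k:ZMod (4*k))+1)) = 1 →
        fI S (x + ((k:ZMod (4*k))+1) + ((k:ZMod (4*k))+1)) = 1 := by
      intro x h1 h2
      have s := hstep (x + ((k:ZMod (4*k))+1)) h2
      rw [show x + ((k:ZMod (4*k))+1) + (3*(k:ZMod (4*k))+1) = x + 2 from by
        linear_combination hz] at s
      have z := hstep2 x h1
      rw [show x + ((k:ZMod (4*k))+1) + ((k:ZMod (4*k))+1)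
        = x + ((k:ZMod (4*k))+1) + ((k:ZMod (4*k))+1) from rfl]
      omega
    exact driver (k+1) hcop ((k:ZMod (4*k))+1) (by push_cast; ring) hprop x0 hx0 hb
  · -- left direction, d = 3k+1
    have hb' : fI S (x0 + (3*(k:ZMod (4*k))+1)) = 1 := by
      have := hfle (x0 + ((k:ZMod (4*k))+1))
      omega
    have hcop : Nat.Coprime (3*k+1) (4*k) := by
      have h4 : Nat.Coprime (3*k+1) 4 := by
        have hodd : (3*k+1) % 2 = 1 := by omega
        have h2 : Nat.Coprime (3*k+1) 2 := by
          rw [Nat.coprime_two_right, Nat.odd_iff]; exact hodd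
        have : (4:ℕ) = 2*2 := by norm_num
        rw [this]
        exact Nat.Coprime.mul_right h2 h2
      refine Nat.Coprime.mul_right h4 ?_
      have h31 : 3*k+1 = 1 + k*3 := by ring
      rw [h31, Nat.coprime_add_mul_left_left]
      exact Nat.coprime_one_left k
    have hprop : ∀ x, fI S x = 1 → fI S (x + (3*(k:ZMod (4*k))+1)) = 1 →
        fI S (x + (3*(k:ZMod (4*k))+1) + (3*(k:ZMod (4*k))+1)) = 1 := by
      intro x h1 h2
      have s := hstep (x + (3*(k:ZMod (4*k))+1)) h2
      rw [show x + (3*(k:ZMod (4*k))+1) + ((k:ZMod (4*k))+1) = x + 2 from by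
        linear_combination hz] at s
      have z := hstep2 x h1
      omega
    exact driver (3*k+1) hcop (3*(k:ZMod (4*k))+1) (by push_cast; ring) hprop x0 hx0 hb'
end

noncomputable section
variable (k : ℕ)

/-- the "slope" element q = k^2 - k + 1 in ZMod (4k) -/
def qz : ZMod (4*k) := (k : ZMod (4*k)) * (k : ZMod (4*k)) - (k : ZMod (4*k)) + 1

/-- positions of the dominating pattern -/
def tP (r : ℕ) : ZMod (4*k) := ((r : ZMod (4*k)) + 1) * qz k - 1

/-- the dominating set of size 2k+1 -/
def SD : Finset (ZMod (4*k) ⊕ ZMod (4*k)) :=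
  ((Finset.range k).image (fun r => Sum.inl (tP k r))) ∪
  ((Finset.range k).image (fun r => Sum.inr (tP k r + 2*k))) ∪ {Sum.inl 0}

variable (hk : 2 ≤ k) (hkeven : k % 2 = 0)

theorem hdvdk : k ∣ 4*k := ⟨4, by ring⟩

/-- reduction of tP mod k -/
theorem castHom_tP (r : ℕ) :
    (ZMod.castHom (hdvdk k) (ZMod k)) (tP k r) = (r : ZMod k) := by
  unfold tP qz
  simp only [map_sub, map_add, map_mul, map_one, map_natCast]
  rw [ZMod.natCast_self]
  ring

include hk in
set_option linter.unusedSectionVars false in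
theorem tP_inj : Set.InjOn (fun r => tP k r) (Finset.range k) := by
  intro r hr r' hr' h
  simp only [Finset.coe_range, Set.mem_Iio] at hr hr'
  have hcg := congrArg (ZMod.castHom (hdvdk k) (ZMod k)) h
  simp only at hcg
  rw [castHom_tP, castHom_tP] at hcg
  haveI : NeZero k := ⟨by omega⟩
  have h1 : (r : ZMod k).val = r := ZMod.val_cast_of_lt hr
  have h2 : (r' : ZMod k).val = r' := ZMod.val_cast_of_lt hr'
  rw [← h1, ← h2, hcg]

include hk hkeven in
theorem tP_ne_zero (r : ℕ) (hr : r < k) : tP k r ≠ 0 := by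
  intro h
  have hcg := congrArg (ZMod.castHom (hdvdk k) (ZMod k)) h
  rw [castHom_tP, map_zero] at hcg
  haveI : NeZero k := ⟨by omega⟩
  have h1 : (r : ZMod k).val = r := ZMod.val_cast_of_lt hr
  have hr0 : r = 0 := by rw [← h1, hcg, ZMod.val_zero]
  subst hr0
  -- now tP k 0 = qz k - 1 = k*(k-1) as cast; show nonzero
  unfold tP qz at h
  have hcast : ((k*(k-1) : ℕ) : ZMod (4*k)) = 0 := by
    push_cast [Nat.cast_sub (show 1 ≤ k by omega)]
    linear_combination h
  rw [ZMod.natCast_eq_zero_iff] at hcast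
  obtain ⟨m, hm⟩ := hcast
  have hkpos : 0 < k := by omega
  have : k - 1 = 4*m := by
    have := hm
    rw [show 4*k*m = k*(4*m) by ring] at this
    exact Nat.eq_of_mul_eq_mul_left hkpos this
  omega

include hk hkeven in
theorem SD_card : (SD k).card = 2*k + 1 := by
  haveI : NeZero (4*k) := ⟨by omega⟩
  unfold SD
  rw [Finset.card_union_of_disjoint, Finset.card_union_of_disjoint]
  · rw [Finset.card_image_of_injOn, Finset.card_image_of_injOn, Finset.card_singleton,
      Finset.card_range]
    · omega
    · intro r hr r' hr' h
      simp only [Finset.coe_range, Set.mem_Iio] at hr hr'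
      have : tP k r + 2*(k:ZMod (4*k)) = tP k r' + 2*(k:ZMod (4*k)) := by
        simpa using h
      have h2 : tP k r = tP k r' := by
        have := this; exact add_right_cancel this
      exact tP_inj k hk (by simpa using hr) (by simpa using hr') h2
    · intro r hr r' hr' h
      simp only [Finset.coe_range, Set.mem_Iio] at hr hr'
      exact tP_inj k hk (by simpa using hr) (by simpa using hr') (by simpa using h)
  · -- inl image disjoint from inr image
    rw [Finset.disjoint_left]
    intro a ha hb
    simp only [Finset.mem_image, Finset.mem_range] at ha hb
    obtain ⟨r, _, hr⟩ := ha
    obtain ⟨r', _, hr'⟩ := hb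
    rw [← hr] at hr'
    exact absurd hr' (by simp)
  · -- union disjoint from {inl 0}
    rw [Finset.disjoint_right]
    intro a ha hb
    simp only [Finset.mem_singleton] at ha
    subst ha
    simp only [Finset.mem_union, Finset.mem_image, Finset.mem_range] at hb
    obtain ⟨r, hr, hr2⟩ | ⟨r, hr, hr2⟩ := hb
    · exact tP_ne_zero k hk hkeven r hr (by simpa using hr2)
    · exact absurd hr2 (by simp)
end

noncomputable section
variable (k : ℕ) (hk : 2 ≤ k) (hkeven : k % 2 = 0)

include hk in
theorem ex4 [NeZero (4*k)] (x y : ZMod (4*k))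
    (h : (ZMod.castHom (hdvdk k) (ZMod k)) x = (ZMod.castHom (hdvdk k) (ZMod k)) y) :
    ∃ j, j < 4 ∧ y = x + ((k*j : ℕ) : ZMod (4*k)) := by
  haveI : NeZero k := ⟨by omega⟩
  set d := y - x with hdd
  have hd : (ZMod.castHom (hdvdk k) (ZMod k)) d = 0 := by
    rw [hdd, map_sub, h, sub_self]
  have hdval : (d.val : ZMod k) = 0 := by
    rw [ZMod.natCast_val]
    exact hd
  have hdvd : k ∣ d.val := by
    rwa [ZMod.natCast_eq_zero_iff] at hdval
  obtain ⟨j, hj⟩ := hdvd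
  have hlt : d.val < 4*k := ZMod.val_lt d
  have hj4 : j < 4 := by
    by_contra hge
    push_neg at hge
    have h4 : 4*k ≤ k*j := by
      calc 4*k = k*4 := by ring
        _ ≤ k*j := Nat.mul_le_mul_left k hge
    omega
  refine ⟨j, hj4, ?_⟩
  have hdc : ((d.val : ℕ) : ZMod (4*k)) = d := by
    rw [ZMod.natCast_val, ZMod.cast_id]
  rw [← hj, hdc, hdd]
  ring

include hk in
theorem castHom_self [NeZero (4*k)] (i : ZMod (4*k)) :
    (ZMod.castHom (hdvdk k) (ZMod k)) i = ((i.val % k : ℕ) : ZMod k) := by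
  haveI : NeZero k := ⟨by omega⟩
  have h1 : (ZMod.castHom (hdvdk k) (ZMod k)) i = ((i.val : ℕ) : ZMod k) := by
    rw [ZMod.castHom_apply, ← ZMod.natCast_val]
  rw [h1]
  conv_lhs => rw [show i.val = k*(i.val/k) + i.val % k from (Nat.div_add_mod i.val k).symm]
  push_cast [ZMod.natCast_self]
  ring

include hk hkeven in
theorem SD_dom [NeZero (4*k)] : IsDominating (petersen (4*k) k) ↑(SD k) := by
  haveI : NeZero k := ⟨by omega⟩
  have hz4 : 4*(k:ZMod (4*k)) = 0 := by
    have := ZMod.natCast_self (4*k); push_cast at this; linear_combination this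
  have hmem_l : ∀ r, r < k → Sum.inl (tP k r) ∈ SD k := by
    intro r hr
    simp only [SD, Finset.mem_union, Finset.mem_image, Finset.mem_range]
    exact Or.inl (Or.inl ⟨r, hr, rfl⟩)
  have hmem_r : ∀ r, r < k → Sum.inr (tP k r + 2*(k:ZMod (4*k))) ∈ SD k := by
    intro r hr
    simp only [SD, Finset.mem_union, Finset.mem_image, Finset.mem_range]
    exact Or.inl (Or.inr ⟨r, hr, by push_cast; ring_nf⟩)
  have hmem_0 : Sum.inl (0 : ZMod (4*k)) ∈ SD k := by
    simp [SD]
  intro v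
  obtain i | i := v
  all_goals {
    set s : ℕ := i.val % k with hs_def
    have hs : s < k := Nat.mod_lt _ (by omega)
    have hcast : (ZMod.castHom (hdvdk k) (ZMod k)) (tP k s)
        = (ZMod.castHom (hdvdk k) (ZMod k)) i := by
      rw [castHom_tP, castHom_self k hk]
    obtain ⟨j, hj4, hij⟩ := ex4 k hk (tP k s) i hcast
    interval_cases j
    -- j = 0
    · first
      | -- outer vertex, i = tP s : in the set
        (left
         rw [Finset.mem_coe, show i = tP k s from by rw [hij]; push_cast; ring]
         exact hmem_l s hs)
      | -- inner vertex: spoke neighbor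
        (right
         refine ⟨Sum.inl (tP k s), by exact_mod_cast hmem_l s hs, ?_⟩
         rw [adj_lr]
         rw [hij]; push_cast; ring)
    -- j = 1
    · first
      | -- inner vertex: cycle neighbor
        (right
         refine ⟨Sum.inr (tP k s + 2*(k:ZMod (4*k))), by exact_mod_cast hmem_r s hs, ?_⟩
         rw [adj_rr]
         have hadj : tP k s + 2*(k:ZMod (4*k)) = i + k := by rw [hij]; push_cast; ring
         exact ⟨k_ne k hk _ i hadj, Or.inr hadj⟩)
      | -- outer vertex
        (rcases (show k % 4 = 0 ∨ k % 4 = 2 by omega) with hk4 | hk4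
         · -- k ≡ 0 mod 4
           obtain ⟨c, hc⟩ : ∃ c, k = 4*c := ⟨k/4, by omega⟩
           have hv0 : (k:ZMod (4*k))*(k:ZMod (4*k)) = 0 := by
             have hd : ((k*k : ℕ) : ZMod (4*k)) = 0 := by
               rw [ZMod.natCast_eq_zero_iff]
               exact ⟨c, by rw [hc]; ring⟩
             push_cast at hd; exact hd
           have hq0 : qz k = 1 - k := by unfold qz; linear_combination hv0
           by_cases hs1 : 1 ≤ s
           · have hadj : i = tP k (s-1) + 1 := by
               have h2 := hij
               unfold tP at h2 ⊢
               rw [hq0] at h2 ⊢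
               push_cast [Nat.cast_sub hs1] at h2 ⊢
               linear_combination h2
             right
             refine ⟨Sum.inl (tP k (s-1)), by exact_mod_cast hmem_l (s-1) (by omega), ?_⟩
             rw [adj_ll]
             exact ⟨(one_ne k hk i (tP k (s-1)) hadj).symm, Or.inl hadj⟩
           · have hs0 : s = 0 := by omega
             have hi0 : i = 0 := by
               have h2 := hij
               unfold tP at h2
               rw [hq0, hs0] at h2
               push_cast at h2
               linear_combination h2
             left
             rw [Finset.mem_coe, hi0]
             exact hmem_0
         · -- k ≡ 2 mod 4
           obtain ⟨c, hc⟩ : ∃ c, k = 4*c+2 := ⟨(k-2)/4, by omega⟩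
           have hv2 : (k:ZMod (4*k))*(k:ZMod (4*k)) + 2*(k:ZMod (4*k)) = 0 := by
             have hd : ((k*(k+2) : ℕ) : ZMod (4*k)) = 0 := by
               rw [ZMod.natCast_eq_zero_iff]
               exact ⟨c+1, by rw [hc]; ring⟩
             push_cast at hd; linear_combination hd
           have hq2 : qz k = (k:ZMod (4*k)) + 1 := by
             unfold qz; linear_combination hv2 - hz4
           by_cases hs1 : s+1 < k
           · have hadj : tP k (s+1) = i + 1 := by
               have h2 := hij
               unfold tP at h2 ⊢
               rw [hq2] at h2 ⊢
               push_cast at h2 ⊢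
               linear_combination -h2
             right
             refine ⟨Sum.inl (tP k (s+1)), by exact_mod_cast hmem_l (s+1) hs1, ?_⟩
             rw [adj_ll]
             exact ⟨one_ne k hk (tP k (s+1)) i hadj, Or.inr hadj⟩
           · have hsk : s = k-1 := by omega
             have hadj : (0 : ZMod (4*k)) = i + 1 := by
               have h2 := hij
               unfold tP at h2
               rw [hq2, hsk] at h2
               push_cast [Nat.cast_sub (show 1 ≤ k by omega)] at h2
               linear_combination -h2 - hv2
             right
             refine ⟨Sum.inl 0, by exact_mod_cast hmem_0, ?_⟩
             rw [adj_ll]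
             exact ⟨one_ne k hk 0 i hadj, Or.inr hadj⟩)
    -- j = 2
    · first
      | -- outer vertex: spoke from inner
        (right
         refine ⟨Sum.inr (tP k s + 2*(k:ZMod (4*k))), by exact_mod_cast hmem_r s hs, ?_⟩
         rw [adj_rl]
         rw [hij]; push_cast; ring)
      | -- inner vertex: in the set
        (left
         rw [Finset.mem_coe, show i = tP k s + 2*(k:ZMod (4*k)) from by rw [hij]; push_cast; ring]
         exact hmem_r s hs)
    -- j = 3
    · first
      | -- inner vertex: cycle neighbor
        (right
         refine ⟨Sum.inr (tP k s + 2*(k:ZMod (4*k))), by exact_mod_cast hmem_r s hs, ?_⟩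
         rw [adj_rr]
         have hadj : i = (tP k s + 2*(k:ZMod (4*k))) + k := by rw [hij]; push_cast; ring
         exact ⟨(k_ne k hk i _ hadj).symm, Or.inl hadj⟩)
      | -- outer vertex
        (rcases (show k % 4 = 0 ∨ k % 4 = 2 by omega) with hk4 | hk4
         · -- k ≡ 0 mod 4
           obtain ⟨c, hc⟩ : ∃ c, k = 4*c := ⟨k/4, by omega⟩
           have hv0 : (k:ZMod (4*k))*(k:ZMod (4*k)) = 0 := by
             have hd : ((k*k : ℕ) : ZMod (4*k)) = 0 := by
               rw [ZMod.natCast_eq_zero_iff]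
               exact ⟨c, by rw [hc]; ring⟩
             push_cast at hd; exact hd
           have hq0 : qz k = 1 - k := by unfold qz; linear_combination hv0
           by_cases hs1 : s+1 < k
           · have hadj : tP k (s+1) = i + 1 := by
               have h2 := hij
               unfold tP at h2 ⊢
               rw [hq0] at h2 ⊢
               push_cast at h2 ⊢
               linear_combination -h2 - hz4
             right
             refine ⟨Sum.inl (tP k (s+1)), by exact_mod_cast hmem_l (s+1) hs1, ?_⟩
             rw [adj_ll]
             exact ⟨one_ne k hk (tP k (s+1)) i hadj, Or.inr hadj⟩
           · have hsk : s = k-1 := by omega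
             have hadj : (0 : ZMod (4*k)) = i + 1 := by
               have h2 := hij
               unfold tP at h2
               rw [hq0, hsk] at h2
               push_cast [Nat.cast_sub (show 1 ≤ k by omega)] at h2
               linear_combination -h2 - hz4 + hv0
             right
             refine ⟨Sum.inl 0, by exact_mod_cast hmem_0, ?_⟩
             rw [adj_ll]
             exact ⟨one_ne k hk 0 i hadj, Or.inr hadj⟩
         · -- k ≡ 2 mod 4
           obtain ⟨c, hc⟩ : ∃ c, k = 4*c+2 := ⟨(k-2)/4, by omega⟩
           have hv2 : (k:ZMod (4*k))*(k:ZMod (4*k)) + 2*(k:ZMod (4*k)) = 0 := by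
             have hd : ((k*(k+2) : ℕ) : ZMod (4*k)) = 0 := by
               rw [ZMod.natCast_eq_zero_iff]
               exact ⟨c+1, by rw [hc]; ring⟩
             push_cast at hd; linear_combination hd
           have hq2 : qz k = (k:ZMod (4*k)) + 1 := by
             unfold qz; linear_combination hv2 - hz4
           by_cases hs1 : 1 ≤ s
           · have hadj : i = tP k (s-1) + 1 := by
               have h2 := hij
               unfold tP at h2 ⊢
               rw [hq2] at h2 ⊢
               push_cast [Nat.cast_sub hs1] at h2 ⊢
               linear_combination h2 + hz4
             right
             refine ⟨Sum.inl (tP k (s-1)), by exact_mod_cast hmem_l (s-1) (by omega), ?_⟩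
             rw [adj_ll]
             exact ⟨(one_ne k hk i (tP k (s-1)) hadj).symm, Or.inl hadj⟩
           · have hs0 : s = 0 := by omega
             have hi0 : i = 0 := by
               have h2 := hij
               unfold tP at h2
               rw [hq2, hs0] at h2
               push_cast at h2
               linear_combination h2 + hz4
             left
             rw [Finset.mem_coe, hi0]
             exact hmem_0) }
end


set_option linter.unusedSectionVars false in
theorem gamma_P4k_even (k : ℕ) (hk : 2 ≤ k) (hkeven : k % 2 = 0) :
    gamma (petersen (4 * k) k) = 2 * k + 1 := by
  haveI : NeZero (4*k) := ⟨by omega⟩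
  have h4k : 4 * k = 4*k := rfl
  unfold gamma
  have hmem : 2*k+1 ∈ {m | ∃ S : Finset (ZMod (4*k) ⊕ ZMod (4*k)),
      IsDominating (petersen (4*k) k) ↑S ∧ S.card = m} :=
    ⟨SD k, SD_dom k hk hkeven, SD_card k hk hkeven⟩
  have hub := Nat.sInf_le hmem
  have hne : {m | ∃ S : Finset (ZMod (4*k) ⊕ ZMod (4*k)),
      IsDominating (petersen (4*k) k) ↑S ∧ S.card = m}.Nonempty := ⟨_, hmem⟩
  obtain ⟨S, hdom, hcS⟩ := Nat.sInf_mem hne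
  have hlb := lower_card k hk hkeven S hdom
  omega
end

section
/- Let S be a dominating set of P(5k,k) with k ≥ 4, and for 0 ≤ i ≤ k−1 let S_i = S ∩ ({v_{i+jk} : 0 ≤ j ≤ 4} ∪ {u_{i+jk} : 0 ≤ j ≤ 4}). If for some ℓ there are two outer vertices v_x, v_y ∈ S_ℓ with |x − y| ∈ {2k, 3k}, then |S_ℓ| ≥ 4. -/
open SimpleGraph

/-- The `i`-th column of a vertex subset of P(5k,k):
vertices with index congruent to `i` mod `k`. -/
def slice5 (k : ℕ) (S : Finset (ZMod (5 * k) ⊕ ZMod (5 * k))) (i : ℕ) :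
    Set (ZMod (5 * k) ⊕ ZMod (5 * k)) :=
  {x | x ∈ S ∧ ∃ j ≤ 4, x = Sum.inl ((i + j * k : ℕ) : ZMod (5 * k)) ∨
        x = Sum.inr ((i + j * k : ℕ) : ZMod (5 * k))}

/-! ### Auxiliary machinery -/

/-- The vertex index in column `ℓ` at level `j` (mod 5). -/
def pcol (k ℓ : ℕ) (j : ZMod 5) : ZMod (5*k) := ((ℓ + j.val * k : ℕ) : ZMod (5*k))

lemma pcol_succ (k ℓ : ℕ) (j : ZMod 5) : pcol k ℓ (j+1) = pcol k ℓ j + (k : ZMod (5*k)) := by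
  have h : ∀ A B : ℕ, A = B + k → ((ℓ + A : ℕ) : ZMod (5*k)) = ((ℓ + B : ℕ) : ZMod (5*k)) + k := by
    intro A B hAB; subst hAB; push_cast; ring
  fin_cases j
  · exact h (1*k) (0*k) (by ring)
  · exact h (2*k) (1*k) (by ring)
  · exact h (3*k) (2*k) (by ring)
  · exact h (4*k) (3*k) (by ring)
  · show ((ℓ + 0*k : ℕ) : ZMod (5*k)) = ((ℓ + 4*k : ℕ) : ZMod (5*k)) + k
    have : ((ℓ + (0*k + 5*k) : ℕ) : ZMod (5*k)) = ((ℓ + 4*k : ℕ) : ZMod (5*k)) + k := by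
      apply h; ring
    rw [show ℓ + (0*k+5*k) = (ℓ + 0*k) + 5*k by ring, Nat.cast_add, ZMod.natCast_self,
      add_zero] at this
    exact this

lemma pcol_inj (k ℓ : ℕ) (hk : 4 ≤ k) (hℓ : ℓ < k) {a b : ZMod 5}
    (h : pcol k ℓ a = pcol k ℓ b) : a = b := by
  have hva : ℓ + a.val * k < 5*k := by
    have h1 := a.val_lt
    have : a.val * k ≤ 4 * k := Nat.mul_le_mul_right k (by omega)
    omega
  have hvb : ℓ + b.val * k < 5*k := by
    have h1 := b.val_lt
    have : b.val * k ≤ 4 * k := Nat.mul_le_mul_right k (by omega)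
    omega
  have := congrArg ZMod.val h
  unfold pcol at this
  rw [ZMod.val_natCast_of_lt hva, ZMod.val_natCast_of_lt hvb] at this
  have hv : a.val = b.val :=
    Nat.eq_of_mul_eq_mul_right (by omega : 0 < k) (by omega : a.val * k = b.val * k)
  exact ZMod.val_injective 5 hv

lemma dominator_of_inner (k ℓ : ℕ) (S : Finset (ZMod (5 * k) ⊕ ZMod (5 * k)))
    (hS : IsDominating (petersen (5 * k) k) ↑S) (j : ZMod 5) :
    ∃ d ∈ S, d = Sum.inr (pcol k ℓ j) ∨ d = Sum.inl (pcol k ℓ j) ∨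
      d = Sum.inr (pcol k ℓ (j-1)) ∨ d = Sum.inr (pcol k ℓ (j+1)) := by
  rcases hS (Sum.inr (pcol k ℓ j)) with h | ⟨d, hdS, hadj⟩
  · exact ⟨_, h, Or.inl rfl⟩
  · refine ⟨d, hdS, ?_⟩
    rw [petersen, SimpleGraph.fromRel_adj] at hadj
    obtain ⟨hne, hrel⟩ := hadj
    match d with
    | Sum.inl i =>
      rcases hrel with h | h
      · simp only at h
        exact Or.inr (Or.inl (by rw [h]))
      · simp at h
    | Sum.inr i =>
      rcases hrel with h | h
      · simp only at h
        refine Or.inr (Or.inr (Or.inl ?_))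
        have h2 : pcol k ℓ (j - 1) + k = pcol k ℓ j := by
          rw [← pcol_succ]; ring_nf
        have : i = pcol k ℓ (j-1) := by
          have : i + (k : ZMod (5*k)) = pcol k ℓ (j-1) + k := by rw [h2, h]
          exact add_right_cancel this
        rw [this]
      · simp only at h
        refine Or.inr (Or.inr (Or.inr ?_))
        rw [h, ← pcol_succ]

lemma mem_slice5 (k ℓ : ℕ) (S : Finset (ZMod (5 * k) ⊕ ZMod (5 * k)))
    (z : ZMod (5 * k) ⊕ ZMod (5 * k)) (hz : z ∈ S) (j : ZMod 5)
    (h : z = Sum.inl (pcol k ℓ j) ∨ z = Sum.inr (pcol k ℓ j)) : z ∈ slice5 k S ℓ :=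
  ⟨hz, j.val, by have := j.val_lt; omega, h⟩

lemma four_le_ncard {V : Type*} (T : Set V) (hfin : T.Finite) (p q r s : V)
    (hp : p ∈ T) (hq : q ∈ T) (hr : r ∈ T) (hs : s ∈ T)
    (hpq : p ≠ q) (hpr : p ≠ r) (hps : p ≠ s) (hqr : q ≠ r) (hqs : q ≠ s) (hrs : r ≠ s) :
    4 ≤ T.ncard := by
  classical
  have hsub : ({p, q, r, s} : Set V) ⊆ T := by
    intro z hz
    rcases hz with h | h | h | h <;> simp_all
  have h4 : ({p, q, r, s} : Set V).ncard = 4 := by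
    rw [Set.ncard_insert_of_notMem (by simp [hpq, hpr, hps]) (Set.toFinite _),
      Set.ncard_insert_of_notMem (by simp [hqr, hqs]) (Set.toFinite _),
      Set.ncard_insert_of_notMem (by simp [hrs]) (Set.toFinite _),
      Set.ncard_singleton]
  rw [← h4]
  exact Set.ncard_le_ncard hsub hfin

lemma core (k ℓ : ℕ) (hk : 4 ≤ k) (hℓ : ℓ < k)
    (S : Finset (ZMod (5 * k) ⊕ ZMod (5 * k)))
    (hS : IsDominating (petersen (5 * k) k) ↑S) (a : ZMod 5)
    (ha : Sum.inl (pcol k ℓ (a+0)) ∈ S) (hb : Sum.inl (pcol k ℓ (a+2)) ∈ S) :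
    4 ≤ (slice5 k S ℓ).ncard := by
  classical
  have hfin : (slice5 k S ℓ).Finite := Set.Finite.subset S.finite_toSet (fun z hz => hz.1)
  have hinl : ∀ s t : ZMod 5, s ≠ t →
      (Sum.inl (pcol k ℓ (a+s)) : ZMod (5*k) ⊕ ZMod (5*k)) ≠ Sum.inl (pcol k ℓ (a+t)) := by
    intro s t hst h
    exact hst (add_left_cancel (pcol_inj k ℓ hk hℓ (Sum.inl.inj h)))
  have hinr : ∀ s t : ZMod 5, s ≠ t →
      (Sum.inr (pcol k ℓ (a+s)) : ZMod (5*k) ⊕ ZMod (5*k)) ≠ Sum.inr (pcol k ℓ (a+t)) := by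
    intro s t hst h
    exact hst (add_left_cancel (pcol_inj k ℓ hk hℓ (Sum.inr.inj h)))
  obtain ⟨d1, hd1S, hd1⟩ := dominator_of_inner k ℓ S hS (a+1)
  rw [show a+1-1 = a+0 by ring, show a+1+1 = a+2 by ring] at hd1
  obtain ⟨d3, hd3S, hd3⟩ := dominator_of_inner k ℓ S hS (a+3)
  rw [show a+3-1 = a+2 by ring, show a+3+1 = a+4 by ring] at hd3
  obtain ⟨d4, hd4S, hd4⟩ := dominator_of_inner k ℓ S hS (a+4)
  rw [show a+4-1 = a+3 by ring,
    show a+4+1 = a+0 by rw [add_assoc]; congr 1] at hd4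
  have mA0 : Sum.inl (pcol k ℓ (a+0)) ∈ slice5 k S ℓ :=
    mem_slice5 k ℓ S _ ha (a+0) (Or.inl rfl)
  have mA2 : Sum.inl (pcol k ℓ (a+2)) ∈ slice5 k S ℓ :=
    mem_slice5 k ℓ S _ hb (a+2) (Or.inl rfl)
  have m1 : d1 ∈ slice5 k S ℓ := by
    rcases hd1 with h|h|h|h
    exacts [mem_slice5 k ℓ S _ hd1S (a+1) (Or.inr h), mem_slice5 k ℓ S _ hd1S (a+1) (Or.inl h),
      mem_slice5 k ℓ S _ hd1S (a+0) (Or.inr h), mem_slice5 k ℓ S _ hd1S (a+2) (Or.inr h)]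
  have m3 : d3 ∈ slice5 k S ℓ := by
    rcases hd3 with h|h|h|h
    exacts [mem_slice5 k ℓ S _ hd3S (a+3) (Or.inr h), mem_slice5 k ℓ S _ hd3S (a+3) (Or.inl h),
      mem_slice5 k ℓ S _ hd3S (a+2) (Or.inr h), mem_slice5 k ℓ S _ hd3S (a+4) (Or.inr h)]
  have m4 : d4 ∈ slice5 k S ℓ := by
    rcases hd4 with h|h|h|h
    exacts [mem_slice5 k ℓ S _ hd4S (a+4) (Or.inr h), mem_slice5 k ℓ S _ hd4S (a+4) (Or.inl h),
      mem_slice5 k ℓ S _ hd4S (a+3) (Or.inr h), mem_slice5 k ℓ S _ hd4S (a+0) (Or.inr h)]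
  have hA02 : (Sum.inl (pcol k ℓ (a+0)) : ZMod (5*k) ⊕ ZMod (5*k)) ≠ Sum.inl (pcol k ℓ (a+2)) :=
    hinl 0 2 (by decide)
  have n1A0 : Sum.inl (pcol k ℓ (a+0)) ≠ d1 := by
    rcases hd1 with h|h|h|h <;> rw [h] <;>
      first | exact hinl _ _ (by decide) | simp
  have n1A2 : Sum.inl (pcol k ℓ (a+2)) ≠ d1 := by
    rcases hd1 with h|h|h|h <;> rw [h] <;>
      first | exact hinl _ _ (by decide) | simp
  have n3A0 : Sum.inl (pcol k ℓ (a+0)) ≠ d3 := by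
    rcases hd3 with h|h|h|h <;> rw [h] <;>
      first | exact hinl _ _ (by decide) | simp
  have n3A2 : Sum.inl (pcol k ℓ (a+2)) ≠ d3 := by
    rcases hd3 with h|h|h|h <;> rw [h] <;>
      first | exact hinl _ _ (by decide) | simp
  have n4A0 : Sum.inl (pcol k ℓ (a+0)) ≠ d4 := by
    rcases hd4 with h|h|h|h <;> rw [h] <;>
      first | exact hinl _ _ (by decide) | simp
  have n4A2 : Sum.inl (pcol k ℓ (a+2)) ≠ d4 := by
    rcases hd4 with h|h|h|h <;> rw [h] <;>
      first | exact hinl _ _ (by decide) | simp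
  by_cases h13 : d1 = d3
  · -- then d1 = inr (pcol (a+2)), and d4 ≠ d1
    have hd1' : d1 = Sum.inr (pcol k ℓ (a+2)) := by
      rcases hd1 with h|h|h|h <;> subst h <;>
        first
          | rfl
          | (exfalso
             rcases hd3 with g|g|g|g <;> rw [g] at h13 <;>
               first
                 | exact hinr _ _ (by decide) h13
                 | exact hinl _ _ (by decide) h13
                 | simp at h13)
    have h14 : d1 ≠ d4 := by
      rw [hd1']
      rcases hd4 with h|h|h|h <;> rw [h] <;>
        first | exact hinr _ _ (by decide) | simp
    exact four_le_ncard _ hfin _ _ _ _ mA0 mA2 m1 m4 hA02 n1A0 n4A0 n1A2 n4A2 h14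
  · exact four_le_ncard _ hfin _ _ _ _ mA0 mA2 m1 m3 hA02 n1A0 n3A0 n1A2 n3A2 h13

theorem slice5_two_outer (k : ℕ) (hk : 4 ≤ k)
    (S : Finset (ZMod (5 * k) ⊕ ZMod (5 * k))) (hS : IsDominating (petersen (5 * k) k) ↑S)
    (ℓ : ℕ) (hℓ : ℓ < k) (x y : ℕ)
    (hx : Sum.inl ((x : ℕ) : ZMod (5 * k)) ∈ slice5 k S ℓ)
    (hy : Sum.inl ((y : ℕ) : ZMod (5 * k)) ∈ slice5 k S ℓ)
    (hxy : max x y - min x y = 2 * k ∨ max x y - min x y = 3 * k) :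
    4 ≤ (slice5 k S ℓ).ncard := by
  obtain ⟨hxS, jx, hjx, hhx⟩ := hx
  obtain ⟨hyS, jy, hjy, hhy⟩ := hy
  rcases hhx with hhx | hhx; swap
  · exact absurd hhx (by simp)
  rcases hhy with hhy | hhy; swap
  · exact absurd hhy (by simp)
  have hhx' : ((x : ℕ) : ZMod (5*k)) = pcol k ℓ (jx : ZMod 5) := by
    rw [Sum.inl.inj hhx]
    unfold pcol
    rw [ZMod.val_natCast_of_lt (by omega)]
  have hhy' : ((y : ℕ) : ZMod (5*k)) = pcol k ℓ (jy : ZMod 5) := by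
    rw [Sum.inl.inj hhy]
    unfold pcol
    rw [ZMod.val_natCast_of_lt (by omega)]
  set ax : ZMod 5 := (jx : ZMod 5)
  set ay : ZMod 5 := (jy : ZMod 5)
  -- establish the key relation: ay = ax + 2 ∨ ax = ay + 2 (up to symmetry)
  have hp2 : ∀ c : ZMod 5, pcol k ℓ (c + 2) = pcol k ℓ c + ((2*k : ℕ) : ZMod (5*k)) := by
    intro c
    rw [show c + 2 = c + 1 + 1 by ring, pcol_succ, pcol_succ]
    push_cast; ring
  have hp3 : ∀ c : ZMod 5, pcol k ℓ (c + 3) = pcol k ℓ c + ((3*k : ℕ) : ZMod (5*k)) := by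
    intro c
    rw [show c + 3 = c + 1 + 1 + 1 by ring, pcol_succ, pcol_succ, pcol_succ]
    push_cast; ring
  have key : ay = ax + 2 ∨ ax = ay + 2 := by
    rcases le_total x y with hle | hle
    · rw [max_eq_right hle, min_eq_left hle] at hxy
      rcases hxy with h | h
      · left
        have hy2 : y = x + 2*k := by omega
        have : pcol k ℓ ay = pcol k ℓ (ax + 2) := by
          rw [hp2, ← hhx', ← hhy', hy2]; push_cast; ring
        exact pcol_inj k ℓ hk hℓ this
      · right
        have hy2 : y = x + 3*k := by omega
        have h0 : ((5*k : ℕ) : ZMod (5*k)) = 0 := ZMod.natCast_self _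
        have : pcol k ℓ ax = pcol k ℓ (ay + 2) := by
          rw [hp2, ← hhx', ← hhy', hy2,
            show ((x:ℕ) : ZMod (5*k)) = ((x + 5*k : ℕ) : ZMod (5*k)) by
              rw [Nat.cast_add, h0, add_zero]]
          push_cast; ring
        exact pcol_inj k ℓ hk hℓ this
    · rw [max_eq_left hle, min_eq_right hle] at hxy
      rcases hxy with h | h
      · right
        have hx2 : x = y + 2*k := by omega
        have : pcol k ℓ ax = pcol k ℓ (ay + 2) := by
          rw [hp2, ← hhx', ← hhy', hx2]; push_cast; ring
        exact pcol_inj k ℓ hk hℓ this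
      · left
        have hx2 : x = y + 3*k := by omega
        have h0 : ((5*k : ℕ) : ZMod (5*k)) = 0 := ZMod.natCast_self _
        have : pcol k ℓ ay = pcol k ℓ (ax + 2) := by
          rw [hp2, ← hhy', ← hhx', hx2,
            show ((y:ℕ) : ZMod (5*k)) = ((y + 5*k : ℕ) : ZMod (5*k)) by
              rw [Nat.cast_add, h0, add_zero]]
          push_cast; ring
        exact pcol_inj k ℓ hk hℓ this
  have hxmem : Sum.inl (pcol k ℓ ax) ∈ S := by rw [← hhx']; exact hxS
  have hymem : Sum.inl (pcol k ℓ ay) ∈ S := by rw [← hhy']; exact hyS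
  rcases key with h | h
  · refine core k ℓ hk hℓ S hS ax ?_ ?_
    · rwa [add_zero]
    · rwa [← h]
  · refine core k ℓ hk hℓ S hS ay ?_ ?_
    · rwa [add_zero]
    · rwa [← h]
end

section
/- Let S be a dominating set of P(5k,k) with k ≥ 4, and for 0 ≤ i ≤ k−1 let S_i = S ∩ ({v_{i+jk} : 0 ≤ j ≤ 4} ∪ {u_{i+jk} : 0 ≤ j ≤ 4}). Then |S_i| ≥ 2 for every i; moreover if |S_ℓ| = 2 for some ℓ, then S_ℓ consists of two non-adjacent inner vertices (i.e., S_ℓ ⊆ {u_{ℓ+jk} : 0 ≤ j ≤ 4} and S_ℓ is independent). -/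
open SimpleGraph

lemma adj_inl_inr {n k : ℕ} {a b : ZMod n} :
    (petersen n k).Adj (Sum.inl a) (Sum.inr b) ↔ b = a := by
  simp [petersen, SimpleGraph.fromRel_adj]

lemma adj_inr_inr {n k : ℕ} {a b : ZMod n} :
    (petersen n k).Adj (Sum.inr a) (Sum.inr b) ↔ a ≠ b ∧ (b = a + k ∨ a = b + k) := by
  simp [petersen, SimpleGraph.fromRel_adj]

lemma natcast_idx_inj {k i : ℕ} (hi : i < k) {a b : ℕ} (ha : a ≤ 4) (hb : b ≤ 4)
    (h : ((i + a * k : ℕ) : ZMod (5 * k)) = ((i + b * k : ℕ) : ZMod (5 * k))) : a = b := by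
  haveI : NeZero (5 * k) := ⟨by omega⟩
  have ha' : i + a * k < 5 * k := by have := Nat.mul_le_mul_right k ha; omega
  have hb' : i + b * k < 5 * k := by have := Nat.mul_le_mul_right k hb; omega
  have hv := congrArg ZMod.val h
  rw [ZMod.val_cast_of_lt ha', ZMod.val_cast_of_lt hb'] at hv
  have hk : 0 < k := by omega
  rcases Nat.eq_or_lt_of_le (le_of_eq hv.symm) with h' | h'
  · exact Nat.eq_of_mul_eq_mul_right hk (by omega)
  · omega

lemma idx_add {k i : ℕ} {j : ℕ} (hj : j ≤ 4) :
    ((i + j * k : ℕ) : ZMod (5 * k)) + (k : ZMod (5 * k))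
      = ((i + ((j + 1) % 5) * k : ℕ) : ZMod (5 * k)) := by
  interval_cases j
  · push_cast; ring
  · push_cast; ring
  · push_cast; ring
  · push_cast; ring
  · have h5 : ((5 * k : ℕ) : ZMod (5 * k)) = 0 := ZMod.natCast_self _
    push_cast at h5 ⊢
    linear_combination h5

def Cov (k i j : ℕ) (t : ZMod (5 * k) ⊕ ZMod (5 * k)) : Prop :=
  t = Sum.inl ((i + j * k : ℕ) : ZMod (5 * k)) ∨
  ∃ m ≤ 4, (m = (j + 4) % 5 ∨ m = j ∨ m = (j + 1) % 5) ∧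
    t = Sum.inr ((i + m * k : ℕ) : ZMod (5 * k))

lemma cover {k i : ℕ} {j : ℕ} (hj : j ≤ 4)
    {t : ZMod (5 * k) ⊕ ZMod (5 * k)}
    (ht : t = Sum.inr ((i + j * k : ℕ) : ZMod (5 * k)) ∨
          (petersen (5 * k) k).Adj t (Sum.inr ((i + j * k : ℕ) : ZMod (5 * k)))) :
    Cov k i j t := by
  match t with
  | Sum.inl c =>
    rcases ht with h | h
    · exact absurd h (by simp)
    · rw [adj_inl_inr] at h
      left; rw [h]
  | Sum.inr a =>
    rcases ht with h | h
    · right; exact ⟨j, hj, Or.inr (Or.inl rfl), h⟩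
    · rw [adj_inr_inr] at h
      rcases h.2 with h2 | h2
      · right
        refine ⟨(j + 4) % 5, by omega, Or.inl rfl, ?_⟩
        have e : ((j + 4) % 5 + 1) % 5 = j := by omega
        have key := idx_add (k := k) (i := i) (j := (j + 4) % 5) (by omega)
        rw [e] at key
        have h3 : a + (k : ZMod (5 * k)) = ((i + ((j + 4) % 5) * k : ℕ) : ZMod (5 * k)) + k := by
          rw [key, ← h2]
        have := add_right_cancel h3
        rw [this]
      · right
        refine ⟨(j + 1) % 5, by omega, Or.inr (Or.inr rfl), ?_⟩
        rw [h2, idx_add hj]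

lemma cov_inr_elim {k i : ℕ} (hi : i < k) {j m : ℕ} (hj : j ≤ 4) (hm : m ≤ 4)
    (h : Cov k i j (Sum.inr ((i + m * k : ℕ) : ZMod (5 * k)))) :
    m = (j + 4) % 5 ∨ m = j ∨ m = (j + 1) % 5 := by
  rcases h with h | ⟨m', hm', hmem, h⟩
  · exact absurd h (by simp)
  · rw [Sum.inr.injEq] at h
    have := natcast_idx_inj hi hm hm' h
    omega

lemma cov_inl_elim {k i : ℕ} (hi : i < k) {j j0 : ℕ} (hj : j ≤ 4) (hj0 : j0 ≤ 4)
    (h : Cov k i j (Sum.inl ((i + j0 * k : ℕ) : ZMod (5 * k)))) : j = j0 := by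
  rcases h with h | ⟨m', hm', hmem, h⟩
  · rw [Sum.inl.injEq] at h
    exact (natcast_idx_inj hi hj0 hj h).symm
  · exact absurd h (by simp)

/-- If one of a covering pair is an outer vertex, contradiction. -/
lemma inl_case_false {k i : ℕ} (hi : i < k) {x y : ZMod (5 * k) ⊕ ZMod (5 * k)} {j0 : ℕ}
    (hj0 : j0 ≤ 4) (hx : x = Sum.inl ((i + j0 * k : ℕ) : ZMod (5 * k)))
    (hcov2 : ∀ j ≤ 4, Cov k i j x ∨ Cov k i j y) : False := by
  subst hx
  have hy : ∀ j ≤ 4, j ≠ j0 → Cov k i j y := by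
    intro j hj hne
    rcases hcov2 j hj with h | h
    · exact absurd (cov_inl_elim hi hj hj0 h) hne
    · exact h
  have h1 := hy ((j0 + 1) % 5) (by omega) (by omega)
  have h3 := hy ((j0 + 3) % 5) (by omega) (by omega)
  have h4 := hy ((j0 + 4) % 5) (by omega) (by omega)
  rcases h1 with h1 | ⟨m, hm, hmem1, rfl⟩
  · subst h1
    have := cov_inl_elim hi (j := (j0 + 3) % 5) (j0 := (j0 + 1) % 5) (by omega) (by omega) h3
    omega
  · have hmem3 := cov_inr_elim hi (by omega) hm h3
    have hmem4 := cov_inr_elim hi (by omega) hm h4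
    omega

/-- If the covering pair are two adjacent inner vertices, contradiction. -/
lemma adj_case_false {k i : ℕ} (hi : i < k) {x y : ZMod (5 * k) ⊕ ZMod (5 * k)} {m1 m2 : ℕ}
    (hm1 : m1 ≤ 4) (hm2 : m2 ≤ 4)
    (hx : x = Sum.inr ((i + m1 * k : ℕ) : ZMod (5 * k)))
    (hy : y = Sum.inr ((i + m2 * k : ℕ) : ZMod (5 * k)))
    (h12 : m2 = (m1 + 1) % 5)
    (hcov2 : ∀ j ≤ 4, Cov k i j x ∨ Cov k i j y) : False := by
  subst hx; subst hy
  rcases hcov2 ((m1 + 3) % 5) (by omega) with h | h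
  · have := cov_inr_elim hi (by omega) hm1 h; omega
  · have := cov_inr_elim hi (by omega) hm2 h; omega

lemma main_aux {k : ℕ} (hk : 4 ≤ k) (S : Finset (ZMod (5 * k) ⊕ ZMod (5 * k)))
    (hS : IsDominating (petersen (5 * k) k) ↑S) {i : ℕ} (hi : i < k) :
    2 ≤ (slice5 k S i).ncard ∧
    ((slice5 k S i).ncard = 2 →
      (∀ x ∈ slice5 k S i, ∃ j ≤ 4, x = Sum.inr ((i + j * k : ℕ) : ZMod (5 * k))) ∧
      (∀ x ∈ slice5 k S i, ∀ y ∈ slice5 k S i, ¬ (petersen (5 * k) k).Adj x y)) := by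
  have hfin : (slice5 k S i).Finite := S.finite_toSet.subset (fun x hx => hx.1)
  have hD : ∀ j, j ≤ 4 → ∃ t, t ∈ slice5 k S i ∧ Cov k i j t := by
    intro j hj
    rcases hS (Sum.inr ((i + j * k : ℕ) : ZMod (5 * k))) with h | ⟨u, hu, hadj⟩
    · exact ⟨_, ⟨h, j, hj, Or.inr rfl⟩, cover hj (Or.inl rfl)⟩
    · have hc := cover hj (Or.inr hadj)
      refine ⟨u, ?_, hc⟩
      rcases hc with h | ⟨m, hm, _, h⟩
      · exact ⟨hu, j, hj, Or.inl h⟩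
      · exact ⟨hu, m, hm, Or.inr h⟩
  obtain ⟨t0, h0T, h0⟩ := hD 0 (by norm_num)
  obtain ⟨t2, h2T, h2⟩ := hD 2 (by norm_num)
  obtain ⟨t3, h3T, h3⟩ := hD 3 (by norm_num)
  have hlower : 2 ≤ (slice5 k S i).ncard := by
    have hpair : ∃ a ∈ slice5 k S i, ∃ b ∈ slice5 k S i, a ≠ b := by
      by_cases h02 : t0 = t2
      · subst h02
        rcases h0 with h | ⟨m, hm, hmem0, rfl⟩
        · subst h
          have := cov_inl_elim hi (by norm_num) (by norm_num) h2
          omega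
        · have hmem2 := cov_inr_elim hi (by norm_num) hm h2
          refine ⟨_, h0T, t3, h3T, fun he => ?_⟩
          rw [← he] at h3
          have hmem3 := cov_inr_elim hi (by norm_num) hm h3
          omega
      · exact ⟨t0, h0T, t2, h2T, h02⟩
    have := (Set.one_lt_ncard hfin).mpr hpair
    omega
  refine ⟨hlower, fun hcard => ?_⟩
  obtain ⟨a, b, hab, hTab⟩ := Set.ncard_eq_two.mp hcard
  have hcov2 : ∀ j ≤ 4, Cov k i j a ∨ Cov k i j b := by
    intro j hj
    obtain ⟨t, htT, htc⟩ := hD j hj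
    rw [hTab] at htT
    simp only [Set.mem_insert_iff, Set.mem_singleton_iff] at htT
    rcases htT with rfl | rfl
    · exact Or.inl htc
    · exact Or.inr htc
  have hinner : ∀ x ∈ slice5 k S i, ∃ j ≤ 4, x = Sum.inr ((i + j * k : ℕ) : ZMod (5 * k)) := by
    rintro x ⟨hxS, j, hj, hform | hform⟩
    · exfalso
      have hxT : x ∈ slice5 k S i := ⟨hxS, j, hj, Or.inl hform⟩
      rw [hTab] at hxT
      simp only [Set.mem_insert_iff, Set.mem_singleton_iff] at hxT
      rcases hxT with rfl | rfl
      · exact inl_case_false hi hj hform hcov2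
      · exact inl_case_false hi hj hform (fun j hj => (hcov2 j hj).symm)
    · exact ⟨j, hj, hform⟩
  refine ⟨hinner, ?_⟩
  intro x hx y hy hadj
  obtain ⟨m1, hm1, rfl⟩ := hinner x hx
  obtain ⟨m2, hm2, rfl⟩ := hinner y hy
  rw [adj_inr_inr] at hadj
  obtain ⟨hne, hcase⟩ := hadj
  have hne' : (Sum.inr ((i + m1 * k : ℕ) : ZMod (5 * k)) : ZMod (5 * k) ⊕ ZMod (5 * k))
      ≠ Sum.inr ((i + m2 * k : ℕ) : ZMod (5 * k)) := fun he => hne (Sum.inr.inj he)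
  have hxy : ∀ j ≤ 4,
      Cov k i j (Sum.inr ((i + m1 * k : ℕ) : ZMod (5 * k))) ∨
      Cov k i j (Sum.inr ((i + m2 * k : ℕ) : ZMod (5 * k))) := by
    rw [hTab] at hx hy
    simp only [Set.mem_insert_iff, Set.mem_singleton_iff] at hx hy
    rcases hx with hx | hx <;> rcases hy with hy | hy
    · exact absurd (hx.trans hy.symm) hne'
    · rw [← hx, ← hy] at hcov2; exact hcov2
    · rw [← hx, ← hy] at hcov2; exact fun j hj => (hcov2 j hj).symm
    · exact absurd (hx.trans hy.symm) hne'
  rcases hcase with h | h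
  · have h12 : m2 = (m1 + 1) % 5 := by
      rw [idx_add hm1] at h
      exact natcast_idx_inj hi hm2 (by omega) h
    exact adj_case_false hi hm1 hm2 rfl rfl h12 hxy
  · have h12 : m1 = (m2 + 1) % 5 := by
      rw [idx_add hm2] at h
      exact natcast_idx_inj hi hm1 (by omega) h
    exact adj_case_false hi hm2 hm1 rfl rfl h12 (fun j hj => (hxy j hj).symm)

theorem slice5_lower_and_structure (k : ℕ) (hk : 4 ≤ k)
    (S : Finset (ZMod (5 * k) ⊕ ZMod (5 * k))) (hS : IsDominating (petersen (5 * k) k) ↑S) :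
    (∀ i < k, 2 ≤ (slice5 k S i).ncard) ∧
    ∀ ℓ < k, (slice5 k S ℓ).ncard = 2 →
      (∀ x ∈ slice5 k S ℓ, ∃ j ≤ 4, x = Sum.inr ((ℓ + j * k : ℕ) : ZMod (5 * k))) ∧
      (∀ x ∈ slice5 k S ℓ, ∀ y ∈ slice5 k S ℓ, ¬ (petersen (5 * k) k).Adj x y) := by
  exact ⟨fun i hi => (main_aux hk S hS hi).1, fun ℓ hℓ h2 => (main_aux hk S hS hℓ).2 h2⟩
end

section
/- For every k ≥ 4, γ(P(5k,k)) ≥ 3k: every dominating set of the generalized Petersen graph P(5k,k) has at least 3k vertices. -/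
open SimpleGraph

namespace GPaux

/-! ### Numeric tables and finite checks -/

def PHI : Nat := 21544670714207338200476584459113301306962735113143656021420230285016436759245260595464800941015275642459145307281050457383188309625982648353599807549282920865602465440346035125442145039834033675191868358146426209170749995361057791689798137601572508409713186959781028554814868311578698930184630758830912296878980187561557572306168416545583963378873308094253580478166547359065032029908791042155145848054973612503263011246330415613043715942892510839887924696568650601581701481092296251344139593057435423906558117200599244312591761276638358820014815958637899716589982536180733995603399453209763531280851328395798163139241
def PSI : Nat := 21536249139118466201166106868313135653528703701769490167213000116125213403068193944985914775516899421311572021471356454485742800976559307237857586686653833661957712899484236775199370664270143192493000915112339805651943131796516032894457975233389131279017205569553034041981123081793735599625359279055207116472484179172079658103877012790240896002469384994421248878088652133381033855372212689985478228262363709817796805783085078721265949912843013841164203529171938657634925071405585625629189444991316617230317565978030741190519520880830609311457964571787906225689950558154929424675082204021338335609762014251889338264233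
def PC : Nat := 55157063682984551670960690248

def phin (A B : Nat) : Nat := (PHI >>> (2*A + 64*B)) &&& 3
def psin (A o : Nat) : Nat := (PSI >>> (2*A + 64*o)) &&& 3
def pc (m : Nat) : Nat := (PC >>> (3*m)) &&& 7
def Nb (a : Nat) : Nat := (((a <<< 1) ||| (a >>> 4)) &&& 31) ||| a ||| (((a >>> 1) ||| (a <<< 4)) &&& 31)
def rotR (m : Nat) : Nat := ((m >>> 1) ||| (m <<< 4)) &&& 31

def chk1 (n : Nat) : Bool :=
  ((Nb (n >>> 10) ||| ((n >>> 5) &&& 31)) != 31) ||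
  (3 + phin ((n >>> 5) &&& 31) (31 ^^^ ((((n >>> 5) &&& 31) ||| (n >>> 10) ||| (n &&& 31)) &&& 31))
     ≤ pc (n >>> 10) + pc ((n >>> 5) &&& 31) + psin (n &&& 31) ((n >>> 5) &&& 31))

def chk2 (n : Nat) : Bool :=
  (((n >>> 10) &&& (31 ^^^ ((n >>> 5) &&& 31))) != 0) ||
  (((n &&& 31) &&& (n >>> 10)) != 0) ||
  (psin (n &&& 31) ((n >>> 5) &&& 31) ≤ phin (n &&& 31) (n >>> 10))

def f8 (f : Nat → Bool) (s : Nat) : Bool :=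
  f s && f (s+1) && f (s+2) && f (s+3) && f (s+4) && f (s+5) && f (s+6) && f (s+7)

def allB (f : Nat → Bool) : Nat → Nat → Nat → Bool
  | 0, s, _ => f8 f s
  | fuel+1, s, n => allB f fuel s (n/2) && allB f fuel (s + n/2) (n - n/2)

theorem allB_sound (f : Nat → Bool) : ∀ fuel s n, n ≤ 8 * 2^fuel →
    allB f fuel s n = true → ∀ i, s ≤ i → i < s + n → f i = true := by
  intro fuel
  induction fuel with
  | zero =>
    intro s n hn h i hsi hin
    simp only [allB, f8, Bool.and_eq_true] at h
    obtain ⟨⟨⟨⟨⟨⟨⟨h0, h1⟩, h2⟩, h3⟩, h4⟩, h5⟩, h6⟩, h7⟩ := h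
    simp only [pow_zero, mul_one] at hn
    obtain ⟨d, rfl⟩ : ∃ d, i = s + d := ⟨i - s, by omega⟩
    have hd : d < 8 := by omega
    interval_cases d <;> simpa
  | succ fuel ih =>
    intro s n hn h i hsi hin
    simp only [allB, Bool.and_eq_true] at h
    have hpow : n / 2 ≤ 8 * 2 ^ fuel ∧ n - n / 2 ≤ 8 * 2 ^ fuel := by
      have : 8 * 2 ^ (fuel + 1) = 2 * (8 * 2 ^ fuel) := by ring
      omega
    rcases Nat.lt_or_ge i (s + n / 2) with hlt | hge
    · exact ih s (n / 2) hpow.1 h.1 i hsi hlt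
    · exact ih (s + n / 2) (n - n / 2) hpow.2 h.2 i hge (by omega)

set_option maxHeartbeats 16000000 in
theorem chk1_all : ∀ i < 32768, chk1 i = true := by
  intro i hi
  have h : allB chk1 12 0 32768 = true := by decide
  exact allB_sound chk1 12 0 32768 (by norm_num) h i (Nat.zero_le _) (by omega)

set_option maxHeartbeats 16000000 in
theorem chk2_all : ∀ i < 32768, chk2 i = true := by
  intro i hi
  have h : allB chk2 12 0 32768 = true := by decide
  exact allB_sound chk2 12 0 32768 (by norm_num) h i (Nat.zero_le _) (by omega)

/-! ### Small decidable facts about 5-bit masks -/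

lemma lt32_lor : ∀ x < 32, ∀ y < 32, x ||| y < 32 := by decide
lemma lt32_Nb : ∀ a < 32, Nb a < 32 := by decide
lemma lt32_rotR : ∀ m < 32, rotR m < 32 := by decide
lemma lt32_comp : ∀ s < 32, 31 ^^^ (s &&& 31) < 32 := by decide
lemma eq_of_bits : ∀ m < 32, ∀ m' < 32, (∀ j < 5, m.testBit j = m'.testBit j) → m = m' := by decide
lemma Nb_bit : ∀ a < 32, ∀ j < 5,
    (Nb a).testBit j = (a.testBit ((j+4)%5) || a.testBit j || a.testBit ((j+1)%5)) := by decide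
lemma bit31 : ∀ j < 5, Nat.testBit 31 j = true := by decide
lemma comp_bit : ∀ s < 32, ∀ j < 5, (31 ^^^ (s &&& 31)).testBit j = !s.testBit j := by decide
lemma rotR_bit : ∀ m < 32, ∀ j < 5, (rotR m).testBit j = m.testBit ((j+1)%5) := by decide
lemma subset_land : ∀ B < 32, ∀ o < 32,
    (∀ j < 5, B.testBit j = true → o.testBit j = true) → B &&& (31 ^^^ o) = 0 := by decide
lemma disj_land : ∀ A < 32, ∀ B < 32,
    (∀ j < 5, ¬(A.testBit j = true ∧ B.testBit j = true)) → A &&& B = 0 := by decide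
lemma phin_rot : ∀ A < 32, ∀ B < 32, phin (rotR A) (rotR B) = phin A B := by decide

/-! ### The key transfer inequalities, decoded -/

lemma L1 {A o a : ℕ} (hA : A < 32) (ho : o < 32) (ha : a < 32) (h : Nb a ||| o = 31) :
    3 + phin o (31 ^^^ ((o ||| a ||| A) &&& 31)) ≤ pc a + pc o + psin A o := by
  have hc := chk1_all (A + 32*o + 1024*a) (by omega)
  have e1 : (A + 32*o + 1024*a) &&& 31 = A := by
    rw [show (31:ℕ) = 2^5 - 1 from rfl, Nat.and_two_pow_sub_one_eq_mod,
      show (2:ℕ)^5 = 32 from rfl]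
    omega
  have e2 : ((A + 32*o + 1024*a) >>> 5) &&& 31 = o := by
    rw [Nat.shiftRight_eq_div_pow, show (31:ℕ) = 2^5 - 1 from rfl,
      Nat.and_two_pow_sub_one_eq_mod, show (2:ℕ)^5 = 32 from rfl]
    omega
  have e3 : (A + 32*o + 1024*a) >>> 10 = a := by
    rw [Nat.shiftRight_eq_div_pow, show (2:ℕ)^10 = 1024 from rfl]
    omega
  unfold chk1 at hc
  rw [e1, e2, e3, h] at hc
  simp only [bne_self_eq_false, Bool.false_or] at hc
  exact of_decide_eq_true hc

lemma L2 {A B o : ℕ} (hA : A < 32) (hB : B < 32) (ho : o < 32)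
    (h1 : B &&& (31 ^^^ o) = 0) (h2 : A &&& B = 0) : psin A o ≤ phin A B := by
  have hc := chk2_all (A + 32*o + 1024*B) (by omega)
  have e1 : (A + 32*o + 1024*B) &&& 31 = A := by
    rw [show (31:ℕ) = 2^5 - 1 from rfl, Nat.and_two_pow_sub_one_eq_mod,
      show (2:ℕ)^5 = 32 from rfl]
    omega
  have e2 : ((A + 32*o + 1024*B) >>> 5) &&& 31 = o := by
    rw [Nat.shiftRight_eq_div_pow, show (31:ℕ) = 2^5 - 1 from rfl,
      Nat.and_two_pow_sub_one_eq_mod, show (2:ℕ)^5 = 32 from rfl]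
    omega
  have e3 : (A + 32*o + 1024*B) >>> 10 = B := by
    rw [Nat.shiftRight_eq_div_pow, show (2:ℕ)^10 = 1024 from rfl]
    omega
  unfold chk2 at hc
  rw [e1, e2, e3, h1, h2] at hc
  simp only [bne_self_eq_false, Bool.false_or] at hc
  exact of_decide_eq_true hc

/-! ### 5-bit masks from boolean functions -/

def mask5 (g : ℕ → Bool) : ℕ :=
  (g 0).toNat + 2*(g 1).toNat + 4*(g 2).toNat + 8*(g 3).toNat + 16*(g 4).toNat

lemma mask5_lt (g : ℕ → Bool) : mask5 g < 32 := by
  have h : ∀ b : Bool, b.toNat ≤ 1 := by decide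
  have h0 := h (g 0); have h1 := h (g 1); have h2 := h (g 2)
  have h3 := h (g 3); have h4 := h (g 4)
  unfold mask5; omega

lemma mask5_testBit (g : ℕ → Bool) : ∀ j, j < 5 → (mask5 g).testBit j = g j := by
  intro j hj
  interval_cases j <;>
    cases h0 : g 0 <;> cases h1 : g 1 <;> cases h2 : g 2 <;> cases h3 : g 3 <;> cases h4 : g 4 <;>
    simp only [mask5, h0, h1, h2, h3, h4] <;> decide

lemma pc_mask5 (g : ℕ → Bool) :
    pc (mask5 g) = ((Finset.range 5).filter (fun j => g j = true)).card := by
  rw [Finset.card_filter, Finset.sum_range_succ, Finset.sum_range_succ, Finset.sum_range_succ,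
    Finset.sum_range_succ, Finset.sum_range_succ, Finset.sum_range_zero]
  cases h0 : g 0 <;> cases h1 : g 1 <;> cases h2 : g 2 <;> cases h3 : g 3 <;> cases h4 : g 4 <;>
    simp only [mask5, h0, h1, h2, h3, h4] <;> decide

/-! ### Graph-side definitions -/

section Graph

variable (k : ℕ) (S : Finset (ZMod (5*k) ⊕ ZMod (5*k)))

def xB (i : ℕ) : Bool := decide ((Sum.inl ((i : ℕ) : ZMod (5*k)) : ZMod (5*k) ⊕ ZMod (5*k)) ∈ S)
def yB (i : ℕ) : Bool := decide ((Sum.inr ((i : ℕ) : ZMod (5*k)) : ZMod (5*k) ⊕ ZMod (5*k)) ∈ S)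
def Hb (i : ℕ) : Bool := (!xB k S (i+1) && !yB k S (i+1)) && !xB k S i

def om (r : ℕ) : ℕ := mask5 (fun j => xB k S (r + j*k))
def am (r : ℕ) : ℕ := mask5 (fun j => yB k S (r + j*k))
def Bm (p : ℕ) : ℕ := mask5 (fun j => Hb k S (p + j*k))

lemma om_bit (r : ℕ) {j : ℕ} (hj : j < 5) : (om k S r).testBit j = xB k S (r + j*k) :=
  mask5_testBit _ j hj
lemma am_bit (r : ℕ) {j : ℕ} (hj : j < 5) : (am k S r).testBit j = yB k S (r + j*k) :=
  mask5_testBit _ j hj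
lemma Bm_bit (p : ℕ) {j : ℕ} (hj : j < 5) : (Bm k S p).testBit j = Hb k S (p + j*k) :=
  mask5_testBit _ j hj

lemma cast_per (i : ℕ) : ((i + 5*k : ℕ) : ZMod (5*k)) = (i : ZMod (5*k)) := by
  have h5 := ZMod.natCast_self (5*k)
  push_cast at h5 ⊢
  linear_combination h5

lemma xB_per (i : ℕ) : xB k S (i + 5*k) = xB k S i := by
  unfold xB; rw [cast_per]
lemma yB_per (i : ℕ) : yB k S (i + 5*k) = yB k S i := by
  unfold yB; rw [cast_per]
lemma Hb_per (i : ℕ) : Hb k S (i + 5*k) = Hb k S i := by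
  unfold Hb
  rw [show i + 5*k + 1 = (i+1) + 5*k from by omega, xB_per, yB_per, xB_per]

lemma mask_shift (h : ℕ → Bool) (hper : ∀ i, h (i + 5*k) = h i) (r : ℕ) :
    mask5 (fun j => h (r + k + j*k)) = rotR (mask5 (fun j => h (r + j*k))) := by
  apply eq_of_bits _ (mask5_lt _) _ (lt32_rotR _ (mask5_lt _))
  intro j hj
  rw [mask5_testBit _ j hj, rotR_bit _ (mask5_lt _) j hj,
    mask5_testBit _ ((j+1)%5) (Nat.mod_lt _ (by norm_num))]
  interval_cases j
  · exact congrArg h (by omega)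
  · exact congrArg h (by omega)
  · exact congrArg h (by omega)
  · exact congrArg h (by omega)
  · rw [show r + k + 4*k = r + 5*k from by ring, hper]
    exact congrArg h (by omega)

lemma om_shift (r : ℕ) : om k S (r + k) = rotR (om k S r) :=
  mask_shift k (fun i => xB k S i) (xB_per k S) r
lemma Bm_shift (p : ℕ) : Bm k S (p + k) = rotR (Bm k S p) :=
  mask_shift k (fun i => Hb k S i) (Hb_per k S) p

/-! ### Adjacency -/

lemma adj_inl {n k' : ℕ} {u : ZMod n ⊕ ZMod n} {i : ZMod n}
    (h : (petersen n k').Adj u (Sum.inl i)) :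
    u = Sum.inl (i + 1) ∨ u = Sum.inl (i - 1) ∨ u = Sum.inr i := by
  rcases u with m | m <;>
    simp only [petersen, fromRel_adj] at h
  · rcases h.2 with h2 | h2
    · right; left; congr 1; rw [h2]; ring
    · left; rw [h2]
  · right; right
    rcases h.2 with h2 | h2
    · exact absurd h2 (by simp)
    · rw [h2]

lemma adj_inr {n k' : ℕ} {u : ZMod n ⊕ ZMod n} {i : ZMod n}
    (h : (petersen n k').Adj u (Sum.inr i)) :
    u = Sum.inl i ∨ u = Sum.inr (i + (k' : ZMod n)) ∨ u = Sum.inr (i - (k' : ZMod n)) := by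
  rcases u with m | m <;>
    simp only [petersen, fromRel_adj] at h
  · left
    rcases h.2 with h2 | h2
    · rw [h2]
    · exact absurd h2 (by simp)
  · right
    rcases h.2 with h2 | h2
    · right; congr 1; rw [eq_sub_iff_add_eq]; exact h2.symm
    · left; rw [h2]

/-! ### Domination unfolded -/

variable (hS : IsDominating (petersen (5*k) k) ↑S)
include hS

lemma domO (i : ℕ) : xB k S (i+1) = true ∨ xB k S (i+2) = true ∨
    xB k S i = true ∨ yB k S (i+1) = true := by
  rcases hS (Sum.inl (((i+1 : ℕ)) : ZMod (5*k))) with h | ⟨u, hu, hadj⟩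
  · left; simpa [xB] using h
  · rcases adj_inl hadj with rfl | rfl | rfl
    · right; left
      have e : ((i+1 : ℕ) : ZMod (5*k)) + 1 = ((i+2 : ℕ) : ZMod (5*k)) := by push_cast; ring
      rw [e] at hu; simpa [xB] using hu
    · right; right; left
      have e : ((i+1 : ℕ) : ZMod (5*k)) - 1 = ((i : ℕ) : ZMod (5*k)) := by push_cast; ring
      rw [e] at hu; simpa [xB] using hu
    · right; right; right; simpa [yB] using hu

omit hS in
lemma cast1 (r j : ℕ) (hj : j < 5) :
    ((r + j*k : ℕ) : ZMod (5*k)) + (k : ZMod (5*k)) = ((r + ((j+1)%5)*k : ℕ) : ZMod (5*k)) := by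
  have h5 := ZMod.natCast_self (5*k)
  push_cast at h5
  interval_cases j
  · push_cast; ring
  · push_cast; ring
  · push_cast; ring
  · push_cast; ring
  · push_cast; linear_combination h5

omit hS in
lemma cast2 (r j : ℕ) (hj : j < 5) :
    ((r + j*k : ℕ) : ZMod (5*k)) - (k : ZMod (5*k)) = ((r + ((j+4)%5)*k : ℕ) : ZMod (5*k)) := by
  have h5 := ZMod.natCast_self (5*k)
  push_cast at h5
  interval_cases j
  · push_cast; linear_combination - h5
  · push_cast; ring
  · push_cast; ring
  · push_cast; ring
  · push_cast; ring

lemma domI (r j : ℕ) (hj : j < 5) :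
    yB k S (r + j*k) = true ∨ yB k S (r + ((j+1)%5)*k) = true ∨
    yB k S (r + ((j+4)%5)*k) = true ∨ xB k S (r + j*k) = true := by
  rcases hS (Sum.inr (((r + j*k : ℕ)) : ZMod (5*k))) with h | ⟨u, hu, hadj⟩
  · left; simpa [yB] using h
  · rcases adj_inr hadj with rfl | rfl | rfl
    · right; right; right; simpa [xB] using hu
    · right; left
      rw [cast1 k r j hj] at hu; simpa [yB] using hu
    · right; right; left
      rw [cast2 k r j hj] at hu; simpa [yB] using hu

/-! ### The per-column inequality -/

lemma col_ineq (p : ℕ) :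
    3 + phin (om k S (p+2)) (Bm k S (p+1)) ≤
      pc (am k S (p+2)) + pc (om k S (p+2)) + phin (om k S (p+1)) (Bm k S p) := by
  have hA : om k S (p+1) < 32 := mask5_lt _
  have ho : om k S (p+2) < 32 := mask5_lt _
  have ha : am k S (p+2) < 32 := mask5_lt _
  have hB : Bm k S p < 32 := mask5_lt _
  have h2 : Nb (am k S (p+2)) ||| om k S (p+2) = 31 := by
    apply eq_of_bits _ (lt32_lor _ (lt32_Nb _ ha) _ ho) 31 (by norm_num)
    intro j hj
    have h45 : (j+4)%5 < 5 := Nat.mod_lt _ (by norm_num)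
    have h15 : (j+1)%5 < 5 := Nat.mod_lt _ (by norm_num)
    rw [Nat.testBit_lor, Nb_bit _ ha j hj, bit31 j hj,
      am_bit k S (p+2) h45, am_bit k S (p+2) hj,
      am_bit k S (p+2) h15, om_bit k S (p+2) hj]
    rcases domI k S hS (p+2) j hj with h | h | h | h <;> simp [h]
  have h1 : Bm k S p &&& (31 ^^^ om k S (p+2)) = 0 := by
    apply subset_land _ hB _ ho
    intro j hj hBj
    rw [Bm_bit k S _ hj] at hBj
    simp only [Hb, Bool.and_eq_true, Bool.not_eq_true'] at hBj
    rw [om_bit k S _ hj]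
    rcases domO k S hS (p + j*k) with h | h | h | h
    · rw [hBj.1.1] at h; exact absurd h (by simp)
    · rw [show p+2+j*k = p + j*k + 2 from by omega]; exact h
    · rw [hBj.2] at h; exact absurd h (by simp)
    · rw [hBj.1.2] at h; exact absurd h (by simp)
  have hdisj : om k S (p+1) &&& Bm k S p = 0 := by
    apply disj_land _ hA _ hB
    intro j hj hcon
    obtain ⟨hA', hB'⟩ := hcon
    rw [om_bit k S _ hj] at hA'
    rw [Bm_bit k S _ hj] at hB'
    simp only [Hb, Bool.and_eq_true, Bool.not_eq_true'] at hB'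
    rw [show p + j*k + 1 = p+1+j*k from by omega] at hB'
    rw [hB'.1.1] at hA'
    exact absurd hA' (by simp)
  have h3 : Bm k S (p+1) =
      31 ^^^ ((om k S (p+2) ||| am k S (p+2) ||| om k S (p+1)) &&& 31) := by
    have hs : om k S (p+2) ||| am k S (p+2) ||| om k S (p+1) < 32 :=
      lt32_lor _ (lt32_lor _ ho _ ha) _ hA
    have hB1 : Bm k S (p+1) < 32 := mask5_lt _
    apply eq_of_bits _ hB1 _ (lt32_comp _ hs)
    intro j hj
    rw [Bm_bit k S (p+1) hj, comp_bit _ hs j hj, Nat.testBit_lor, Nat.testBit_lor,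
      om_bit k S _ hj, am_bit k S _ hj, om_bit k S _ hj]
    simp only [Hb, Bool.not_or]
    rw [show p+1+j*k+1 = p+2+j*k from by omega]
  have hL2 : psin (om k S (p+1)) (om k S (p+2)) ≤ phin (om k S (p+1)) (Bm k S p) :=
    L2 hA hB ho h1 hdisj
  have hL1 := L1 hA ho ha h2
  rw [← h3] at hL1
  omega

/-! ### Counting -/

def Fcol (r : ℕ) : Finset (ZMod (5*k) ⊕ ZMod (5*k)) :=
  ((Finset.range 5).filter (fun j => xB k S (r + j*k) = true)).image
      (fun j => Sum.inl ((r + j*k : ℕ) : ZMod (5*k))) ∪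
  ((Finset.range 5).filter (fun j => yB k S (r + j*k) = true)).image
      (fun j => Sum.inr ((r + j*k : ℕ) : ZMod (5*k)))

omit hS in
lemma Fcol_subset (r : ℕ) : Fcol k S r ⊆ S := by
  intro v hv
  simp only [Fcol, Finset.mem_union, Finset.mem_image, Finset.mem_filter,
    Finset.mem_range] at hv
  rcases hv with ⟨j, ⟨hj, hx⟩, rfl⟩ | ⟨j, ⟨hj, hy⟩, rfl⟩
  · exact of_decide_eq_true hx
  · exact of_decide_eq_true hy

omit hS in
lemma cast_inj (hk : 1 ≤ k) (r : ℕ) {j1 j2 : ℕ} (h1 : j1 < 5) (h2 : j2 < 5)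
    (h : ((r + j1*k : ℕ) : ZMod (5*k)) = ((r + j2*k : ℕ) : ZMod (5*k))) : j1 = j2 := by
  haveI : NeZero (5*k) := ⟨by omega⟩
  have hv : (r + j1*k) % (5*k) = (r + j2*k) % (5*k) := by
    have := congrArg ZMod.val h
    rwa [ZMod.val_natCast, ZMod.val_natCast] at this
  rcases Nat.le_total j1 j2 with hle | hle
  · have hxy : r + j1*k ≤ r + j2*k := by
      have := Nat.mul_le_mul_right k hle; omega
    have hd : 5*k ∣ (r + j2*k) - (r + j1*k) := (Nat.modEq_iff_dvd' hxy).mp hv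
    have he : (r + j2*k) - (r + j1*k) = (j2 - j1) * k := by
      have := Nat.sub_mul j2 j1 k; omega
    rw [he] at hd
    have hz : (j2 - j1) * k = 0 := by
      by_contra hnz
      have hge := Nat.le_of_dvd (Nat.pos_of_ne_zero hnz) hd
      have hle4 : (j2 - j1) * k ≤ 4 * k := Nat.mul_le_mul_right k (by omega)
      omega
    have : j2 - j1 = 0 := by
      rcases Nat.mul_eq_zero.mp hz with h' | h' <;> omega
    omega
  · have hxy : r + j2*k ≤ r + j1*k := by
      have := Nat.mul_le_mul_right k hle; omega
    have hd : 5*k ∣ (r + j1*k) - (r + j2*k) := (Nat.modEq_iff_dvd' hxy).mp hv.symm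
    have he : (r + j1*k) - (r + j2*k) = (j1 - j2) * k := by
      have := Nat.sub_mul j1 j2 k; omega
    rw [he] at hd
    have hz : (j1 - j2) * k = 0 := by
      by_contra hnz
      have hge := Nat.le_of_dvd (Nat.pos_of_ne_zero hnz) hd
      have hle4 : (j1 - j2) * k ≤ 4 * k := Nat.mul_le_mul_right k (by omega)
      omega
    have : j1 - j2 = 0 := by
      rcases Nat.mul_eq_zero.mp hz with h' | h' <;> omega
    omega

omit hS in
lemma val_mod (hk : 1 ≤ k) {r : ℕ} (hr : r ∈ Finset.Ico k (2*k)) {j : ℕ} (hj : j < 5) :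
    ((( r + j*k : ℕ) : ZMod (5*k))).val % k = r - k := by
  haveI : NeZero (5*k) := ⟨by omega⟩
  rw [ZMod.val_natCast]
  rw [Nat.mod_mod_of_dvd _ (dvd_mul_left k 5)]
  rw [Nat.add_mul_mod_self_right]
  simp only [Finset.mem_Ico] at hr
  calc r % k = (k + (r - k)) % k := by congr 1; omega
    _ = (r - k) % k := Nat.add_mod_left _ _
    _ = r - k := Nat.mod_eq_of_lt (by omega)

omit hS in
lemma mem_Fcol_val (hk : 1 ≤ k) {r : ℕ} (hr : r ∈ Finset.Ico k (2*k))
    {v : ZMod (5*k) ⊕ ZMod (5*k)} (hv : v ∈ Fcol k S r) :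
    (Sum.elim (fun i => ZMod.val i) (fun i => ZMod.val i) v) % k = r - k := by
  simp only [Fcol, Finset.mem_union, Finset.mem_image, Finset.mem_filter,
    Finset.mem_range] at hv
  rcases hv with ⟨j, ⟨hj, _⟩, rfl⟩ | ⟨j, ⟨hj, _⟩, rfl⟩ <;>
    simpa using val_mod k hk hr hj

omit hS in
lemma card_Fcol (hk : 1 ≤ k) (r : ℕ) :
    (Fcol k S r).card = pc (am k S r) + pc (om k S r) := by
  have hinj1 : Set.InjOn (fun j => (Sum.inl ((r + j*k : ℕ) : ZMod (5*k)) : ZMod (5*k) ⊕ ZMod (5*k)))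
      ↑((Finset.range 5).filter (fun j => xB k S (r + j*k) = true)) := by
    intro j1 hj1 j2 hj2 he
    simp only [Finset.coe_filter, Finset.mem_range, Set.mem_setOf_eq] at hj1 hj2
    exact cast_inj k hk r hj1.1 hj2.1 (by simpa using he)
  have hinj2 : Set.InjOn (fun j => (Sum.inr ((r + j*k : ℕ) : ZMod (5*k)) : ZMod (5*k) ⊕ ZMod (5*k)))
      ↑((Finset.range 5).filter (fun j => yB k S (r + j*k) = true)) := by
    intro j1 hj1 j2 hj2 he
    simp only [Finset.coe_filter, Finset.mem_range, Set.mem_setOf_eq] at hj1 hj2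
    exact cast_inj k hk r hj1.1 hj2.1 (by simpa using he)
  have hdisj : Disjoint
      (((Finset.range 5).filter (fun j => xB k S (r + j*k) = true)).image
        (fun j => (Sum.inl ((r + j*k : ℕ) : ZMod (5*k)) : ZMod (5*k) ⊕ ZMod (5*k))))
      (((Finset.range 5).filter (fun j => yB k S (r + j*k) = true)).image
        (fun j => (Sum.inr ((r + j*k : ℕ) : ZMod (5*k)) : ZMod (5*k) ⊕ ZMod (5*k)))) := by
    rw [Finset.disjoint_left]
    rintro v hv1 hv2
    simp only [Finset.mem_image] at hv1 hv2
    obtain ⟨j1, _, rfl⟩ := hv1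
    obtain ⟨j2, _, h⟩ := hv2
    exact absurd h (by simp)
  rw [Fcol, Finset.card_union_of_disjoint hdisj, Finset.card_image_of_injOn hinj1,
    Finset.card_image_of_injOn hinj2]
  unfold am om
  rw [pc_mask5, pc_mask5]
  exact Nat.add_comm _ _

omit hS in
lemma sum_card (hk : 1 ≤ k) :
    ∑ r ∈ Finset.Ico k (2*k), (pc (am k S r) + pc (om k S r)) ≤ S.card := by
  have hd : ∀ r1 ∈ Finset.Ico k (2*k), ∀ r2 ∈ Finset.Ico k (2*k), r1 ≠ r2 →
      Disjoint (Fcol k S r1) (Fcol k S r2) := by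
    intro r1 hr1 r2 hr2 hne
    rw [Finset.disjoint_left]
    intro v hv1 hv2
    have e1 := mem_Fcol_val k S hk hr1 hv1
    have e2 := mem_Fcol_val k S hk hr2 hv2
    simp only [Finset.mem_Ico] at hr1 hr2
    omega
  calc ∑ r ∈ Finset.Ico k (2*k), (pc (am k S r) + pc (om k S r))
      = ∑ r ∈ Finset.Ico k (2*k), (Fcol k S r).card :=
        Finset.sum_congr rfl (fun r _ => (card_Fcol k S hk r).symm)
    _ = ((Finset.Ico k (2*k)).biUnion (Fcol k S)).card := (Finset.card_biUnion hd).symm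
    _ ≤ S.card := Finset.card_le_card (Finset.biUnion_subset.mpr fun r _ => Fcol_subset k S r)

/-! ### Telescoping -/

lemma sum_phi (q : ℕ) : ∀ m : ℕ,
    3*m + phin (om k S (q+m+1)) (Bm k S (q+m)) ≤
      (∑ r ∈ Finset.Ico (q+2) (q+2+m), (pc (am k S r) + pc (om k S r))) +
        phin (om k S (q+1)) (Bm k S q) := by
  intro m
  induction m with
  | zero => simp
  | succ m ih =>
    have hcol := col_ineq k S hS (q+m)
    rw [show q+2+(m+1) = (q+2+m)+1 from rfl, Finset.sum_Ico_succ_top (by omega)]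
    rw [show q+2+m = (q+m)+2 from by omega] at ih ⊢
    rw [show q+(m+1)+1 = (q+m)+2 from by omega, show q+(m+1) = (q+m)+1 from by omega]
    omega

end Graph

end GPaux

theorem gamma_P5k_lower (k : ℕ) (hk : 4 ≤ k)
    (S : Finset (ZMod (5 * k) ⊕ ZMod (5 * k)))
    (hS : IsDominating (petersen (5 * k) k) ↑S) :
    3 * k ≤ S.card := by
  obtain ⟨q, rfl⟩ : ∃ q, k = q + 2 := ⟨k - 2, by omega⟩
  have hsum := GPaux.sum_phi (q+2) S hS q (q+2)
  have hrot : GPaux.phin (GPaux.om (q+2) S (q+(q+2)+1)) (GPaux.Bm (q+2) S (q+(q+2))) =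
      GPaux.phin (GPaux.om (q+2) S (q+1)) (GPaux.Bm (q+2) S q) := by
    rw [show q+(q+2)+1 = (q+1)+(q+2) from by omega, GPaux.om_shift]
    rw [show q+(q+2) = q+(q+2) from rfl, GPaux.Bm_shift]
    exact GPaux.phin_rot _ (GPaux.mask5_lt _) _ (GPaux.mask5_lt _)
  rw [hrot] at hsum
  have hcard := GPaux.sum_card (q+2) S (by omega)
  rw [show 2*(q+2) = (q+2)+(q+2) from by omega] at hcard
  omega
end
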